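/- arXiv:2303.11248 — 2 statements merged into one kernel-verified Lean document; each statement's English description precedes it below -/
import Mathlib

section
/- Let φ = p̃/p be a bidegree (m,n) rational inner function on 𝔻² and let α ∈ 𝕋 be a generic parameter value for which the weight-vanishing theorem applies (all but finitely many α). Then each Clark weight W_j^α(ζ) = |∂φ/∂z₂(ζ, g_j^α(ζ))|^{-1}, j = 1,…,n, is a bounded function on 𝕋. -/
open MeasureTheory Complex Filter Topology

noncomputable section

/-- The open unit bidisk `𝔻²` in `ℂ²`. -/
def bidisk : Set (ℂ × ℂ) := {z | ‖z.1‖ < 1 ∧ ‖z.2‖ < 1}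

/-- The closed bidisk. -/
def closedBidisk : Set (ℂ × ℂ) := {z | ‖z.1‖ ≤ 1 ∧ ‖z.2‖ ≤ 1}

/-- The distinguished boundary `𝕋²` of the bidisk. -/
def torus2 : Set (ℂ × ℂ) := {z | ‖z.1‖ = 1 ∧ ‖z.2‖ = 1}

/-- Evaluation of a two-variable polynomial at a point of `ℂ²`. -/
def ev (p : MvPolynomial (Fin 2) ℂ) (z : ℂ × ℂ) : ℂ :=
  MvPolynomial.eval ![z.1, z.2] p

/-- The rational function `φ = p̃/p`. -/
def rif (p pt : MvPolynomial (Fin 2) ℂ) (z : ℂ × ℂ) : ℂ := ev pt z / ev p z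

/-- The partial derivative `∂φ/∂z₁` of `φ = p̃/p`, via the quotient rule. -/
def dphi1 (p pt : MvPolynomial (Fin 2) ℂ) (z : ℂ × ℂ) : ℂ :=
  (ev (MvPolynomial.pderiv 0 pt) z * ev p z - ev pt z * ev (MvPolynomial.pderiv 0 p) z) /
    (ev p z) ^ 2

/-- The partial derivative `∂φ/∂z₂` of `φ = p̃/p`, via the quotient rule. -/
def dphi2 (p pt : MvPolynomial (Fin 2) ℂ) (z : ℂ × ℂ) : ℂ :=
  (ev (MvPolynomial.pderiv 1 pt) z * ev p z - ev pt z * ev (MvPolynomial.pderiv 1 p) z) /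
    (ev p z) ^ 2

/-- `pt` is the reflection `p̃(z₁,z₂) = z₁^m z₂^n conj(p(1/conj z₁, 1/conj z₂))` of `p`
at bidegree `(m,n)`. -/
def IsReflection2 (m n : ℕ) (p pt : MvPolynomial (Fin 2) ℂ) : Prop :=
  ∀ z : ℂ × ℂ, z.1 ≠ 0 → z.2 ≠ 0 →
    ev pt z = z.1 ^ m * z.2 ^ n *
      (starRingEnd ℂ) (ev p (((starRingEnd ℂ) z.1)⁻¹, ((starRingEnd ℂ) z.2)⁻¹))

/-- The data of a bidegree `(m,n)` rational inner function `φ = p̃/p` on the bidisk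
(with `m, n ≥ 1`):  `p` has degree `m` in `z₁` and `n` in `z₂`, is zero-free on `𝔻²`,
and has no common factor with its reflection `p̃`. -/
structure IsRIF2 (m n : ℕ) (p pt : MvPolynomial (Fin 2) ℂ) : Prop where
  hm : 1 ≤ m
  hn : 1 ≤ n
  deg1 : MvPolynomial.degreeOf 0 p = m
  deg2 : MvPolynomial.degreeOf 1 p = n
  stable : ∀ z ∈ bidisk, ev p z ≠ 0
  coprime : ∀ r : MvPolynomial (Fin 2) ℂ, r ∣ p → r ∣ pt → IsUnit r
  reflection : IsReflection2 m n p pt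

/-- The unimodular level set `C_α(φ)`, the closure of the set of points of `𝕋²` where
the radial limit of `φ` equals `α`. -/
def levelSet2 (p pt : MvPolynomial (Fin 2) ℂ) (α : ℂ) : Set (ℂ × ℂ) :=
  closure {ζ | ζ ∈ torus2 ∧
    Tendsto (fun r : ℝ => rif p pt ((r : ℂ) * ζ.1, (r : ℂ) * ζ.2))
      (𝓝[<] (1 : ℝ)) (𝓝 α)}

/-- `α` is an exceptional value for `φ = p̃/p`: some horizontal or vertical line of `𝕋²`
is contained in `C_α(φ)`. -/
def IsExceptional (p pt : MvPolynomial (Fin 2) ℂ) (α : ℂ) : Prop :=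
  ∃ τ : ℂ, ‖τ‖ = 1 ∧
    ({ζ : ℂ × ℂ | ζ.1 = τ ∧ ‖ζ.2‖ = 1} ⊆ levelSet2 p pt α ∨
     {ζ : ℂ × ℂ | ‖ζ.1‖ = 1 ∧ ζ.2 = τ} ⊆ levelSet2 p pt α)

/-- `α` is a generic value for `φ = p̃/p`. -/
def IsGenericValue (p pt : MvPolynomial (Fin 2) ℂ) (α : ℂ) : Prop :=
  ¬ IsExceptional p pt α

/-- Normalized Lebesgue (arclength) measure on the unit circle, as a measure on `ℂ`. -/
def mCircle : Measure ℂ :=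
  (ENNReal.ofReal (2 * Real.pi))⁻¹ •
    Measure.map (fun θ : ℝ => Complex.exp ((θ : ℂ) * Complex.I))
      (MeasureTheory.volume.restrict (Set.Ico 0 (2 * Real.pi)))

/-- The two-variable product Poisson kernel. -/
def poisson2 (z ζ : ℂ × ℂ) : ℝ :=
  ((1 - ‖z.1‖ ^ 2) / ‖ζ.1 - z.1‖ ^ 2) * ((1 - ‖z.2‖ ^ 2) / ‖ζ.2 - z.2‖ ^ 2)

/-- `σ` is the Clark measure of `φ = p̃/p` at parameter `α`: a positive Borel measure
on `𝕋²` whose Poisson integral is `(1-|φ(z)|²)/|α-φ(z)|²`. -/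
def IsClarkMeasure2 (p pt : MvPolynomial (Fin 2) ℂ) (α : ℂ) (σ : Measure (ℂ × ℂ)) : Prop :=
  σ torus2ᶜ = 0 ∧
  ∀ z ∈ bidisk,
    ∫⁻ ζ, ENNReal.ofReal (poisson2 z ζ) ∂σ =
      ENNReal.ofReal ((1 - ‖rif p pt z‖ ^ 2) / ‖α - rif p pt z‖ ^ 2)

/-- `g₁, …, g_n : 𝕋 → 𝕋` are functions on the circle, analytic except possibly at one
base point `τ₀ ∈ 𝕋`. -/
def IsGraphFamily (n : ℕ) (g : Fin n → ℂ → ℂ) : Prop :=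
  (∀ j, ∀ ζ : ℂ, ‖ζ‖ = 1 → ‖g j ζ‖ = 1) ∧
  ∃ τ₀ : ℂ, ‖τ₀‖ = 1 ∧ ∀ j, ∀ θ : ℝ,
    Complex.exp ((θ : ℂ) * Complex.I) ≠ τ₀ →
      AnalyticAt ℝ (fun t : ℝ => g j (Complex.exp ((t : ℂ) * Complex.I))) θ

/-- The union of the graphs `{(ζ, g_j(ζ)) : ζ ∈ 𝕋}`. -/
def graphUnion (n : ℕ) (g : Fin n → ℂ → ℂ) : Set (ℂ × ℂ) :=
  ⋃ j, {w : ℂ × ℂ | ‖w.1‖ = 1 ∧ w.2 = g j w.1}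

/-- The vertical line `{ζ ∈ 𝕋² : ζ₁ = τ}`. -/
def vLine (τ : ℂ) : Set (ℂ × ℂ) := {w : ℂ × ℂ | w.1 = τ ∧ ‖w.2‖ = 1}


/-! ### Auxiliary machinery for the proof -/

namespace ClarkAux

open Polynomial

/-- The slice of a two-variable polynomial along `z₁ = τ`, as a one-variable polynomial. -/
noncomputable def sliceP (p : MvPolynomial (Fin 2) ℂ) (τ : ℂ) : Polynomial ℂ :=
  MvPolynomial.aeval ![Polynomial.C τ, Polynomial.X] p

lemma sliceP_eval (p : MvPolynomial (Fin 2) ℂ) (τ z : ℂ) :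
    (sliceP p τ).eval z = ev p (τ, z) := by
  induction p using MvPolynomial.induction_on with
  | C a => simp [sliceP, ev]
  | add q r hq hr => simp only [sliceP, ev, map_add, Polynomial.eval_add] at *
                     rw [hq, hr]
  | mul_X q i hq =>
      simp only [sliceP, ev, map_mul, Polynomial.eval_mul, MvPolynomial.aeval_X,
        MvPolynomial.eval_X] at *
      rw [hq]
      congr 1
      fin_cases i <;> simp

lemma sliceP_add (p q : MvPolynomial (Fin 2) ℂ) (τ : ℂ) :
    sliceP (p + q) τ = sliceP p τ + sliceP q τ := by simp [sliceP]

lemma sliceP_derivative (p : MvPolynomial (Fin 2) ℂ) (τ : ℂ) :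
    (sliceP p τ).derivative = sliceP (MvPolynomial.pderiv 1 p) τ := by
  induction p using MvPolynomial.induction_on with
  | C a => simp [sliceP]
  | add q r hq hr => simp only [sliceP, map_add, Polynomial.derivative_add] at *
                     rw [hq, hr]
  | mul_X q i hq =>
      have hx : MvPolynomial.pderiv (σ := Fin 2) (R := ℂ) 1 (q * MvPolynomial.X i)
          = (MvPolynomial.pderiv 1 q) * MvPolynomial.X i
            + q * MvPolynomial.pderiv 1 (MvPolynomial.X i) := by
        rw [MvPolynomial.pderiv_mul]
      rw [hx]
      simp only [sliceP, map_mul, map_add, Polynomial.derivative_mul] at *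
      rw [hq]
      by_cases h1 : i = 1
      · subst h1; simp [MvPolynomial.pderiv_X_self]
      · have h0 : i = 0 := by omega
        subst h0
        simp [MvPolynomial.pderiv_X_of_ne (by norm_num : (1 : Fin 2) ≠ 0)]

lemma sliceP_natDegree_le (p : MvPolynomial (Fin 2) ℂ) (τ : ℂ) :
    (sliceP p τ).natDegree ≤ MvPolynomial.degreeOf 1 p := by
  classical
  rw [sliceP, MvPolynomial.aeval_def, MvPolynomial.eval₂_eq]
  refine Polynomial.natDegree_sum_le_of_forall_le _ _ (fun m hm => ?_)
  have hle : m 1 ≤ MvPolynomial.degreeOf 1 p := by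
    rw [MvPolynomial.degreeOf_eq_sup]
    exact Finset.le_sup (f := fun m : Fin 2 →₀ ℕ => m 1) hm
  refine le_trans ?_ hle
  refine le_trans Polynomial.natDegree_mul_le ?_
  have h1 : (algebraMap ℂ (Polynomial ℂ) (MvPolynomial.coeff m p)).natDegree = 0 :=
    Polynomial.natDegree_C _
  rw [h1, zero_add]
  refine le_trans (Polynomial.natDegree_prod_le _ _) ?_
  have hsum : ∑ i ∈ m.support, ((![Polynomial.C τ, Polynomial.X] i) ^ m i).natDegree
      ≤ ∑ i : Fin 2, ((![Polynomial.C τ, Polynomial.X] i) ^ m i).natDegree :=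
    Finset.sum_le_sum_of_subset (Finset.subset_univ _)
  refine le_trans hsum ?_
  rw [Fin.sum_univ_two]
  have e0 : ((![Polynomial.C τ, Polynomial.X] 0) ^ m 0 : Polynomial ℂ).natDegree = 0 := by
    simp [Polynomial.natDegree_pow]
  have e1 : ((![Polynomial.C τ, Polynomial.X] 1) ^ m 1 : Polynomial ℂ).natDegree ≤ m 1 := by
    simp [Polynomial.natDegree_pow]
  omega

lemma ev_continuous (p : MvPolynomial (Fin 2) ℂ) : Continuous (ev p) := by
  induction p using MvPolynomial.induction_on with
  | C a =>
      have : ev (MvPolynomial.C a) = fun _ : ℂ × ℂ => a := by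
        funext z; simp [ev]
      rw [this]; exact continuous_const
  | add q r hq hr =>
      have : ev (q + r) = fun z => ev q z + ev r z := by
        funext z; simp [ev]
      rw [this]; exact hq.add hr
  | mul_X q i hq =>
      by_cases h1 : i = 1
      · subst h1
        have : ev (q * MvPolynomial.X 1) = fun z => ev q z * z.2 := by
          funext z; simp [ev]
        rw [this]; exact hq.mul continuous_snd
      · have h0 : i = 0 := by omega
        subst h0
        have : ev (q * MvPolynomial.X 0) = fun z => ev q z * z.1 := by
          funext z; simp [ev]
        rw [this]; exact hq.mul continuous_fst

lemma conj_inv_of_norm_one {ζ : ℂ} (h : ‖ζ‖ = 1) : ((starRingEnd ℂ) ζ)⁻¹ = ζ := by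
  have h1 : (starRingEnd ℂ) ζ * ζ = 1 := by
    rw [mul_comm, Complex.mul_conj]
    norm_cast
    rw [Complex.normSq_eq_norm_sq, h]; norm_num
  exact inv_eq_of_mul_eq_one_right h1

lemma normSq_one_of_norm_one {ζ : ℂ} (h : ‖ζ‖ = 1) : Complex.normSq ζ = 1 := by
  rw [Complex.normSq_eq_norm_sq, h]; norm_num


lemma norm_mprod (s : Multiset ℂ) : ‖s.prod‖ = (s.map fun z => ‖z‖).prod := by
  induction s using Multiset.induction_on with
  | empty => simp
  | cons x s ih => simp [norm_mul, ih]

lemma mprod_nonneg (s : Multiset ℝ) (h : ∀ x ∈ s, 0 ≤ x) : 0 ≤ s.prod := by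
  induction s using Multiset.induction_on with
  | empty => simp
  | cons x s ih =>
      rw [Multiset.prod_cons]
      exact mul_nonneg (h x (Multiset.mem_cons_self x s))
        (ih fun y hy => h y (Multiset.mem_cons_of_mem hy))

lemma pair_prod_le (a b : ℂ) (ha : ‖a‖ < 1) (hb : ‖b‖ ≤ 1) (s : Multiset ℂ)
    (hs : ∀ β ∈ s, 1 ≤ ‖β‖) :
    (s.map fun β => (1 - ‖a‖)/2 * ‖b - β‖).prod ≤ (s.map fun β => ‖a - β‖).prod := by
  induction s using Multiset.induction_on with
  | empty => simp
  | cons x s ih =>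
      simp only [Multiset.map_cons, Multiset.prod_cons]
      have hx : 1 ≤ ‖x‖ := hs x (Multiset.mem_cons_self x s)
      have h1 : ‖x‖ - ‖a‖ ≤ ‖a - x‖ := by
        have := abs_norm_sub_norm_le a x
        rw [abs_le] at this
        linarith [this.1]
      have h2 : ‖b - x‖ ≤ 1 + ‖x‖ := le_trans (norm_sub_le b x) (by linarith)
      have key : (1 - ‖a‖)/2 * ‖b - x‖ ≤ ‖a - x‖ := by
        nlinarith [norm_nonneg a, norm_nonneg (b - x)]
      refine mul_le_mul key (ih fun β hβ => hs β (Multiset.mem_cons_of_mem hβ)) ?_ ?_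
      · refine mprod_nonneg _ ?_
        intro y hy
        obtain ⟨β, hβ, rfl⟩ := Multiset.mem_map.mp hy
        have h0 : (0:ℝ) ≤ 1 - ‖a‖ := by linarith
        positivity
      · exact norm_nonneg _

lemma eval_lower_bound (f : Polynomial ℂ) (n : ℕ) (hd : f.natDegree ≤ n)
    (hr : ∀ β ∈ f.roots, 1 ≤ ‖β‖) (a b : ℂ) (ha : ‖a‖ < 1) (hb : ‖b‖ ≤ 1) :
    ‖f.eval b‖ * ((1 - ‖a‖)/2)^n ≤ ‖f.eval a‖ := by
  by_cases hf : f = 0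
  · simp [hf]
  have hsplit : Polynomial.Splits f := IsAlgClosed.splits f
  have heq := hsplit.eq_prod_roots
  have hcard : f.roots.card = f.natDegree := (Polynomial.splits_iff_card_roots).mp hsplit
  have heval : ∀ x : ℂ, ‖f.eval x‖ = ‖f.leadingCoeff‖ * (f.roots.map fun β => ‖x - β‖).prod := by
    intro x
    have h1 : f.eval x = f.leadingCoeff * ((f.roots.map fun β => x - β).prod) := by
      conv_lhs => rw [heq]
      rw [Polynomial.eval_mul, Polynomial.eval_C, Polynomial.eval_multiset_prod,
        Multiset.map_map]
      congr 1
      refine congrArg Multiset.prod (Multiset.map_congr rfl ?_)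
      intro β hβ
      simp [Function.comp]
    rw [h1, norm_mul, norm_mprod, Multiset.map_map]
    rfl
  rw [heval a, heval b]
  set c : ℝ := (1 - ‖a‖)/2 with hc
  have hc0 : 0 ≤ c := by rw [hc]; linarith [norm_nonneg a]
  have hc1 : c ≤ 1 := by rw [hc]; linarith [norm_nonneg a]
  have hPb : 0 ≤ (f.roots.map fun β => ‖b - β‖).prod := by
    refine mprod_nonneg _ ?_
    intro y hy
    obtain ⟨β, hβ, rfl⟩ := Multiset.mem_map.mp hy
    exact norm_nonneg _
  have hpow : c^n ≤ c^(f.roots.card) := by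
    rw [hcard]; exact pow_le_pow_of_le_one hc0 hc1 hd
  have hstep1 : ‖f.leadingCoeff‖ * (f.roots.map fun β => ‖b - β‖).prod * c^n
      ≤ ‖f.leadingCoeff‖ * ((f.roots.map fun β => c * ‖b - β‖).prod) := by
    have : (f.roots.map fun β => c * ‖b - β‖).prod
        = c^(f.roots.card) * (f.roots.map fun β => ‖b - β‖).prod := by
      rw [Multiset.prod_map_mul]
      congr 1
      rw [Multiset.map_const', Multiset.prod_replicate]
    rw [this]
    have := mul_le_mul_of_nonneg_left hpow hPb
    calc ‖f.leadingCoeff‖ * (f.roots.map fun β => ‖b - β‖).prod * c^n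
        = ‖f.leadingCoeff‖ * ((f.roots.map fun β => ‖b - β‖).prod * c^n) := by ring
      _ ≤ ‖f.leadingCoeff‖ * (c^(f.roots.card) * (f.roots.map fun β => ‖b - β‖).prod) := by
          refine mul_le_mul_of_nonneg_left ?_ (norm_nonneg _)
          calc (f.roots.map fun β => ‖b - β‖).prod * c^n
              = c^n * (f.roots.map fun β => ‖b - β‖).prod := by ring
            _ ≤ c^(f.roots.card) * (f.roots.map fun β => ‖b - β‖).prod :=
                mul_le_mul_of_nonneg_right hpow hPb
  refine le_trans hstep1 ?_
  refine mul_le_mul_of_nonneg_left ?_ (norm_nonneg _)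
  exact pair_prod_le a b ha hb f.roots hr

lemma tendsto_ev_slice (p : MvPolynomial (Fin 2) ℂ) (τ x : ℂ) :
    Filter.Tendsto (fun r : ℝ => ev p ((r : ℂ) * τ, x)) (𝓝[<] (1:ℝ)) (𝓝 (ev p (τ, x))) := by
  have hcont : Continuous (fun r : ℝ => ev p ((r : ℂ) * τ, x)) :=
    (ev_continuous p).comp ((Complex.continuous_ofReal.mul continuous_const).prodMk
      continuous_const)
  have := hcont.tendsto (1 : ℝ)
  simp only [Complex.ofReal_one, one_mul] at this
  exact this.mono_left nhdsWithin_le_nhds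

lemma slice_eval_ne_zero {p : MvPolynomial (Fin 2) ℂ} {n : ℕ}
    (hst : ∀ z ∈ bidisk, ev p z ≠ 0) (hdeg : MvPolynomial.degreeOf 1 p ≤ n)
    {τ : ℂ} (hτ : ‖τ‖ = 1) (hQ : sliceP p τ ≠ 0) {a : ℂ} (ha : ‖a‖ < 1) :
    (sliceP p τ).eval a ≠ 0 := by
  classical
  -- choose a good point b in the disk where the slice does not vanish
  obtain ⟨b, hbS, hbT⟩ : ∃ b : ℂ, (b ∈ (fun t : ℝ => (t : ℂ)/2) '' Set.Ioo (0:ℝ) 1)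
      ∧ b ∉ {x : ℂ | (sliceP p τ).IsRoot x} := by
    have hinf : ((fun t : ℝ => (t : ℂ)/2) '' Set.Ioo (0:ℝ) 1).Infinite := by
      refine Set.Infinite.image ?_ (Set.Ioo_infinite (by norm_num : (0:ℝ) < 1))
      intro x hx y hy hxy
      have : (x : ℂ) = (y : ℂ) := by
        field_simp at hxy; exact_mod_cast hxy
      exact_mod_cast this
    have hfin : ({x : ℂ | (sliceP p τ).IsRoot x}).Finite := Polynomial.finite_setOf_isRoot hQ
    obtain ⟨b, hb⟩ := (hinf.diff hfin).nonempty
    exact ⟨b, hb.1, hb.2⟩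
  have hbnorm : ‖b‖ < 1 := by
    obtain ⟨t, ht, rfl⟩ := hbS
    simp only [norm_div, Complex.norm_real, Real.norm_eq_abs, abs_of_pos ht.1]
    have h2 : ‖(2:ℂ)‖ = 2 := by norm_num
    rw [h2]
    linarith [ht.2]
  have hbne : ev p (τ, b) ≠ 0 := by
    rw [← sliceP_eval]; exact hbT
  set c : ℝ := (1 - ‖a‖)/2 with hc
  have hc0 : 0 < c := by rw [hc]; linarith
  -- the inequality for interior slices
  have hineq : ∀ r : ℝ, r ∈ Set.Ioo (0:ℝ) 1 →
      ‖ev p ((r:ℂ) * τ, b)‖ * c^n ≤ ‖ev p ((r:ℂ) * τ, a)‖ := by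
    intro r hr
    have hrn : ‖(r:ℂ) * τ‖ < 1 := by
      rw [norm_mul, hτ, mul_one, Complex.norm_real, Real.norm_eq_abs, abs_of_pos hr.1]
      exact hr.2
    have hroots : ∀ β ∈ (sliceP p ((r:ℂ) * τ)).roots, 1 ≤ ‖β‖ := by
      intro β hβ
      by_contra hlt
      push_neg at hlt
      have hzero : ev p ((r:ℂ) * τ, β) = 0 := by
        rw [← sliceP_eval]
        exact (Polynomial.mem_roots'.mp hβ).2
      exact hst ((r:ℂ) * τ, β) ⟨hrn, hlt⟩ hzero
    have := eval_lower_bound (sliceP p ((r:ℂ) * τ)) n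
      (le_trans (sliceP_natDegree_le _ _) hdeg) hroots a b ha (le_of_lt hbnorm)
    rw [sliceP_eval, sliceP_eval] at this
    exact this
  -- pass to the limit r → 1⁻
  have hmem : Set.Ioo (0:ℝ) 1 ∈ 𝓝[<] (1:ℝ) :=
    Ioo_mem_nhdsLT_of_mem (by norm_num : (1:ℝ) ∈ Set.Ioc (0:ℝ) 1)
  have hlim : ‖ev p (τ, b)‖ * c^n ≤ ‖ev p (τ, a)‖ := by
    refine le_of_tendsto_of_tendsto ((tendsto_ev_slice p τ b).norm.mul_const _)
      (tendsto_ev_slice p τ a).norm ?_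
    filter_upwards [hmem] with r hr
    exact hineq r hr
  intro hcontra
  rw [sliceP_eval] at hcontra
  rw [hcontra] at hlim
  simp only [norm_zero] at hlim
  have : 0 < ‖ev p (τ, b)‖ * c^n := mul_pos (norm_pos_iff.mpr hbne) (pow_pos hc0 n)
  linarith

lemma slice_roots_norm {p : MvPolynomial (Fin 2) ℂ} {n : ℕ}
    (hst : ∀ z ∈ bidisk, ev p z ≠ 0) (hdeg : MvPolynomial.degreeOf 1 p ≤ n)
    {τ : ℂ} (hτ : ‖τ‖ = 1) (hQ : sliceP p τ ≠ 0) :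
    ∀ β ∈ (sliceP p τ).roots, 1 ≤ ‖β‖ := by
  intro β hβ
  by_contra hlt
  push_neg at hlt
  exact slice_eval_ne_zero hst hdeg hτ hQ hlt (Polynomial.mem_roots'.mp hβ).2


lemma one_sub_conj_mul {y : ℂ} (β : ℂ) (hy : ‖y‖ = 1) :
    1 - (starRingEnd ℂ) β * y = y * (starRingEnd ℂ) (y - β) := by
  have h1 : y * (starRingEnd ℂ) y = 1 := by
    rw [Complex.mul_conj]
    exact_mod_cast normSq_one_of_norm_one hy
  rw [map_sub]
  linear_combination -h1

lemma conj_mul_self (β : ℂ) : (starRingEnd ℂ) β * β = ((Complex.normSq β : ℝ) : ℂ) := by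
  rw [mul_comm, Complex.mul_conj]

lemma prod_factor_eq (y β : ℂ) (hy : ‖y‖ = 1) :
    (y - β) * (1 - (starRingEnd ℂ) β * y) = y * ((Complex.normSq (y - β) : ℝ) : ℂ) := by
  rw [one_sub_conj_mul β hy]
  calc (y - β) * (y * (starRingEnd ℂ) (y - β))
      = y * ((y - β) * (starRingEnd ℂ) (y - β)) := by ring
    _ = y * ((Complex.normSq (y - β) : ℝ) : ℂ) := by rw [Complex.mul_conj]

/-- The key Wronskian identity for a slice of a RIF: the numerator of `∂φ/∂z₂`
along a boundary slice evaluates, at a unimodular point, to the product of the two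
polynomial values times a nonnegative real number (a sum of Poisson-type terms). -/
lemma wronskian_eval (L c₀ y : ℂ) (e : ℕ) (hy : ‖y‖ = 1) (s : Multiset ℂ)
    (hs : ∀ β ∈ s, β ≠ y) :
    y * (((Polynomial.C c₀ * Polynomial.X ^ e *
            (s.map fun β => 1 - Polynomial.C ((starRingEnd ℂ) β) * Polynomial.X).prod).derivative.eval y)
          * ((Polynomial.C L * (s.map fun β => Polynomial.X - Polynomial.C β).prod).eval y)
        - ((Polynomial.C c₀ * Polynomial.X ^ e *
            (s.map fun β => 1 - Polynomial.C ((starRingEnd ℂ) β) * Polynomial.X).prod).eval y)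
          * ((Polynomial.C L * (s.map fun β => Polynomial.X - Polynomial.C β).prod).derivative.eval y))
      = ((Polynomial.C c₀ * Polynomial.X ^ e *
            (s.map fun β => 1 - Polynomial.C ((starRingEnd ℂ) β) * Polynomial.X).prod).eval y)
        * ((Polynomial.C L * (s.map fun β => Polynomial.X - Polynomial.C β).prod).eval y)
        * ((((e : ℝ) + (s.map fun β =>
              (Complex.normSq β - 1) / Complex.normSq (y - β)).sum) : ℝ) : ℂ) := by
  induction s using Multiset.induction_on with
  | empty =>
      simp only [Multiset.map_zero, Multiset.prod_zero, mul_one, Multiset.sum_zero, add_zero]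
      rw [Polynomial.derivative_C_mul, Polynomial.derivative_X_pow, Polynomial.derivative_C]
      cases e with
      | zero => simp
      | succ k =>
          simp only [Polynomial.eval_mul, Polynomial.eval_C, Polynomial.eval_pow,
            Polynomial.eval_X, Polynomial.eval_natCast, Nat.cast_add, Nat.cast_one,
            Nat.add_sub_cancel, Polynomial.eval_zero, mul_zero, sub_zero]
          push_cast
          ring
  | cons β t ih =>
      have hβy : β ≠ y := hs β (Multiset.mem_cons_self β t)
      have ihs : ∀ γ ∈ t, γ ≠ y := fun γ hγ => hs γ (Multiset.mem_cons_of_mem hγ)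
      have IH := ih ihs
      have hβyne : y - β ≠ 0 := sub_ne_zero.mpr (Ne.symm hβy)
      have hnsq : Complex.normSq (y - β) ≠ 0 := fun h => hβyne (Complex.normSq_eq_zero.mp h)
      have hnsqC : ((Complex.normSq (y - β) : ℝ) : ℂ) ≠ 0 := by
        exact_mod_cast hnsq
      have h2 : ((Complex.normSq (y - β) : ℝ) : ℂ)
            * ((((Complex.normSq β : ℝ) : ℂ) - 1) / ((Complex.normSq (y - β) : ℝ) : ℂ))
          = ((Complex.normSq β : ℝ) : ℂ) - 1 := mul_div_cancel₀ _ hnsqC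
      have h1 := prod_factor_eq y β hy
      have h4 := conj_mul_self β
      simp only [Multiset.map_cons, Multiset.prod_cons, Multiset.sum_cons,
        Polynomial.derivative_mul, Polynomial.derivative_sub, Polynomial.derivative_one,
        Polynomial.derivative_C, Polynomial.derivative_X, Polynomial.derivative_C_mul,
        Polynomial.derivative_X_pow,
        Polynomial.eval_add, Polynomial.eval_mul, Polynomial.eval_sub, Polynomial.eval_one,
        Polynomial.eval_neg, Polynomial.eval_C, Polynomial.eval_X, Polynomial.eval_pow,
        Polynomial.eval_natCast, zero_mul, mul_zero, zero_sub, sub_zero, zero_add, add_zero,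
        Complex.ofReal_add, Complex.ofReal_natCast, Complex.ofReal_div, Complex.ofReal_sub,
        Complex.ofReal_one] at IH ⊢
      linear_combination
        ((y - β) * (1 - (starRingEnd ℂ) β * y)) * IH
        + (c₀ * y^e
            * (Polynomial.eval y
                (Multiset.map (fun γ => 1 - Polynomial.C ((starRingEnd ℂ) γ) * Polynomial.X) t).prod)
            * L
            * (Polynomial.eval y
                (Multiset.map (fun γ => Polynomial.X - Polynomial.C γ) t).prod))
          * (y * h4 - y * h2
              - ((((Complex.normSq β : ℝ) : ℂ) - 1) / ((Complex.normSq (y - β) : ℝ) : ℂ)) * h1)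

lemma norm_prod_le_one (s : Multiset ℂ) (h : ∀ x ∈ s, ‖x‖ ≤ 1) : ‖s.prod‖ ≤ 1 := by
  induction s using Multiset.induction_on with
  | empty => simp
  | cons x s ih =>
      rw [Multiset.prod_cons, norm_mul]
      have h1 := h x (Multiset.mem_cons_self x s)
      have h2 := ih fun y hy => h y (Multiset.mem_cons_of_mem hy)
      calc ‖x‖ * ‖s.prod‖ ≤ 1 * 1 :=
            mul_le_mul h1 h2 (norm_nonneg _) (by norm_num)
        _ = 1 := by norm_num

lemma telescope_bound (y : ℂ) (hy : ‖y‖ = 1) (s : Multiset ℂ)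
    (hs : ∀ β ∈ s, 1 ≤ ‖β‖ ∧ β ≠ y) :
    ‖(s.map fun β => (1 - (starRingEnd ℂ) β * y) / (y - β)).prod
        - (s.map fun β => -β⁻¹).prod‖
      ≤ 2 * (s.map fun β => (Complex.normSq β - 1) / Complex.normSq (y - β)).sum := by
  induction s using Multiset.induction_on with
  | empty => simp
  | cons β t ih =>
      obtain ⟨hβ1, hβy⟩ := hs β (Multiset.mem_cons_self β t)
      have hts : ∀ γ ∈ t, 1 ≤ ‖γ‖ ∧ γ ≠ y := fun γ hγ => hs γ (Multiset.mem_cons_of_mem hγ)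
      have IH := ih hts
      simp only [Multiset.map_cons, Multiset.prod_cons, Multiset.sum_cons]
      set x : ℂ := (1 - (starRingEnd ℂ) β * y) / (y - β) with hx
      set w : ℂ := -β⁻¹ with hw
      set A : ℂ := (t.map fun γ => (1 - (starRingEnd ℂ) γ * y) / (y - γ)).prod with hA
      set B : ℂ := (t.map fun γ => -γ⁻¹).prod with hB
      have hβ0 : β ≠ 0 := by
        intro h; rw [h] at hβ1; simp at hβ1; linarith
      have hyβ : y - β ≠ 0 := sub_ne_zero.mpr (Ne.symm hβy)
      have hxnorm : ‖x‖ = 1 := by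
        rw [hx, norm_div, one_sub_conj_mul β hy, norm_mul, RCLike.norm_conj, hy, one_mul,
          div_self (norm_ne_zero_iff.mpr hyβ)]
      have hBnorm : ‖B‖ ≤ 1 := by
        refine norm_prod_le_one _ ?_
        intro z hz
        obtain ⟨γ, hγ, rfl⟩ := Multiset.mem_map.mp hz
        rw [norm_neg, norm_inv]
        have := (hts γ hγ).1
        rw [inv_le_one_iff₀]
        right; exact this
      have hP0 : 0 ≤ (Complex.normSq β - 1) / Complex.normSq (y - β) := by
        have hnormSqβ : 1 ≤ Complex.normSq β := by
          rw [Complex.normSq_eq_norm_sq]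
          nlinarith [norm_nonneg β]
        exact div_nonneg (by linarith) (Complex.normSq_nonneg _)
      have hxw : ‖x - w‖ ≤ 2 * ((Complex.normSq β - 1) / Complex.normSq (y - β)) := by
        have hxwval : x - w = y * (1 - ((Complex.normSq β : ℝ) : ℂ)) / (β * (y - β)) := by
          rw [hx, hw]
          rw [eq_div_iff (mul_ne_zero hβ0 (sub_ne_zero.mpr (Ne.symm hβy)))]
          field_simp
          linear_combination (-y) * conj_mul_self β
        rw [hxwval]
        rw [norm_div, norm_mul, norm_mul, hy, one_mul]
        have hnormSqβ : 1 ≤ Complex.normSq β := by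
          rw [Complex.normSq_eq_norm_sq]
          nlinarith [norm_nonneg β]
        have h1 : ‖(1 : ℂ) - ((Complex.normSq β : ℝ) : ℂ)‖ = Complex.normSq β - 1 := by
          rw [← Complex.ofReal_one, ← Complex.ofReal_sub, Complex.norm_real,
            Real.norm_eq_abs, abs_of_nonpos (by linarith), neg_sub]
        rw [h1]
        have hyβnorm : 0 < ‖y - β‖ := norm_pos_iff.mpr hyβ
        have hβnorm : 0 < ‖β‖ := norm_pos_iff.mpr hβ0
        have hnsq : Complex.normSq (y - β) = ‖y - β‖^2 := by
          rw [Complex.normSq_eq_norm_sq]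
        rw [hnsq]
        have hkey : ‖y - β‖ ≤ 2 * ‖β‖ := by
          calc ‖y - β‖ ≤ ‖y‖ + ‖β‖ := norm_sub_le _ _
            _ = 1 + ‖β‖ := by rw [hy]
            _ ≤ 2 * ‖β‖ := by nlinarith [hβ1]
        rw [show 2 * ((Complex.normSq β - 1) / ‖y - β‖^2)
            = (2 * (Complex.normSq β - 1)) / ‖y - β‖^2 from by ring]
        rw [div_le_div_iff₀ (by positivity) (by positivity)]
        have hmono := mul_le_mul_of_nonneg_left hkey
          (mul_nonneg (by linarith : (0:ℝ) ≤ Complex.normSq β - 1) hyβnorm.le)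
        nlinarith [hmono]
      have hsplit : ‖x * A - w * B‖ ≤ ‖x‖ * ‖A - B‖ + ‖x - w‖ * ‖B‖ := by
        calc ‖x * A - w * B‖ = ‖x * (A - B) + (x - w) * B‖ := by ring_nf
          _ ≤ ‖x * (A - B)‖ + ‖(x - w) * B‖ := norm_add_le _ _
          _ = ‖x‖ * ‖A - B‖ + ‖x - w‖ * ‖B‖ := by rw [norm_mul, norm_mul]
      calc ‖x * A - w * B‖ ≤ ‖x‖ * ‖A - B‖ + ‖x - w‖ * ‖B‖ := hsplit
        _ ≤ 1 * (2 * (t.map fun γ => (Complex.normSq γ - 1) / Complex.normSq (y - γ)).sum)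
            + (2 * ((Complex.normSq β - 1) / Complex.normSq (y - β))) * 1 := by
            refine add_le_add ?_ ?_
            · rw [hxnorm]
              simpa using IH
            · refine mul_le_mul hxw hBnorm (norm_nonneg _) ?_
              linarith [hP0]
        _ = 2 * ((Complex.normSq β - 1) / Complex.normSq (y - β)
            + (t.map fun γ => (Complex.normSq γ - 1) / Complex.normSq (y - γ)).sum) := by ring


lemma rif_continuousAt {p pt : MvPolynomial (Fin 2) ℂ} {x : ℂ × ℂ} (hp : ev p x ≠ 0) :
    ContinuousAt (rif p pt) x :=
  ((ev_continuous pt).continuousAt).div ((ev_continuous p).continuousAt) hp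

lemma tendsto_radial (x : ℂ × ℂ) :
    Filter.Tendsto (fun r : ℝ => (((r : ℂ) * x.1, (r : ℂ) * x.2) : ℂ × ℂ))
      (𝓝[<] (1:ℝ)) (𝓝 x) := by
  have hcont : Continuous (fun r : ℝ => (((r : ℂ) * x.1, (r : ℂ) * x.2) : ℂ × ℂ)) :=
    (Complex.continuous_ofReal.mul continuous_const).prodMk
      (Complex.continuous_ofReal.mul continuous_const)
  have h1 := hcont.tendsto (1:ℝ)
  simp only [Complex.ofReal_one, one_mul] at h1
  exact h1.mono_left nhdsWithin_le_nhds

lemma mem_levelset_base {p pt : MvPolynomial (Fin 2) ℂ} {α : ℂ} {x : ℂ × ℂ}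
    (hx : x ∈ torus2) (hp : ev p x ≠ 0) (hval : rif p pt x = α) :
    x ∈ {ζ : ℂ × ℂ | ζ ∈ torus2 ∧
      Filter.Tendsto (fun r : ℝ => rif p pt ((r : ℂ) * ζ.1, (r : ℂ) * ζ.2))
        (𝓝[<] (1 : ℝ)) (𝓝 α)} := by
  refine ⟨hx, ?_⟩
  have h1 := ((rif_continuousAt (pt := pt) hp).tendsto).comp (tendsto_radial x)
  rw [hval] at h1
  exact h1

lemma rif_eq_of_mem_levelSet {p pt : MvPolynomial (Fin 2) ℂ} {α : ℂ} {x : ℂ × ℂ}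
    (hx : x ∈ levelSet2 p pt α) (hp : ev p x ≠ 0) :
    rif p pt x = α := by
  set S : Set (ℂ × ℂ) := {ζ : ℂ × ℂ | ζ ∈ torus2 ∧
    Filter.Tendsto (fun r : ℝ => rif p pt ((r : ℂ) * ζ.1, (r : ℂ) * ζ.2))
      (𝓝[<] (1 : ℝ)) (𝓝 α)} with hS
  have hU : IsOpen {z : ℂ × ℂ | ev p z ≠ 0} :=
    isOpen_compl_singleton.preimage (ev_continuous p)
  have hx2 : x ∈ closure ({z : ℂ × ℂ | ev p z ≠ 0} ∩ S) := by
    apply hU.inter_closure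
    exact ⟨hp, hx⟩
  obtain ⟨u, hu, hul⟩ := mem_closure_iff_seq_limit.mp hx2
  have huval : ∀ k, rif p pt (u k) = α := by
    intro k
    have hpk : ev p (u k) ≠ 0 := (hu k).1
    have h1 := ((rif_continuousAt (pt := pt) hpk).tendsto).comp (tendsto_radial (u k))
    exact tendsto_nhds_unique h1 (hu k).2.2
  have h2 := ((rif_continuousAt (pt := pt) hp).tendsto).comp hul
  have h3 : Filter.Tendsto (fun k => rif p pt (u k)) Filter.atTop (𝓝 α) := by
    simp only [huval]
    exact tendsto_const_nhds
  exact tendsto_nhds_unique h2 h3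

lemma circle_seq_avoid (z : ℂ) (hz : ‖z‖ = 1) (T : Set ℂ) (hT : T.Finite) :
    ∃ u : ℕ → ℂ, (∀ k, ‖u k‖ = 1 ∧ u k ∉ T) ∧ Filter.Tendsto u Filter.atTop (𝓝 z) := by
  have hz0 : z ≠ 0 := by intro h; rw [h] at hz; simp at hz
  have hex : ∀ k : ℕ, ∃ θ : ℝ, θ ∈ Set.Ioo (0:ℝ) (1/(k+1)) ∧
      z * Complex.exp ((θ:ℂ) * Complex.I) ∉ T := by
    intro k
    by_contra hc
    push_neg at hc
    have hk1 : (0:ℝ) < 1/(k+1) := by positivity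
    have hinj : Set.InjOn (fun θ : ℝ => z * Complex.exp ((θ:ℂ) * Complex.I))
        (Set.Ioo (0:ℝ) (1/(k+1))) := by
      intro θ₁ h₁ θ₂ h₂ heq
      simp only at heq
      have hexp : Complex.exp ((θ₁:ℂ) * Complex.I) = Complex.exp ((θ₂:ℂ) * Complex.I) :=
        mul_left_cancel₀ hz0 heq
      obtain ⟨ni, hni⟩ := Complex.exp_eq_exp_iff_exists_int.mp hexp
      have hI : ((θ₁ : ℂ) - θ₂ - ni * (2 * Real.pi)) * Complex.I = 0 := by
        linear_combination hni
      have h0 : (θ₁ : ℂ) - θ₂ - ni * (2 * Real.pi) = 0 := by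
        rcases mul_eq_zero.mp hI with h | h
        · exact h
        · exact absurd h Complex.I_ne_zero
      have hreal : θ₁ - θ₂ - ni * (2 * Real.pi) = 0 := by
        exact_mod_cast h0
      have hb : |θ₁ - θ₂| < 1 := by
        rw [abs_lt]
        constructor
        · have := h₁.1; have := h₂.2
          have hle : 1/((k:ℝ)+1) ≤ 1 := by
            rw [div_le_one (by positivity)]
            linarith [Nat.cast_nonneg (α := ℝ) k]
          nlinarith
        · have := h₂.1; have := h₁.2
          have hle : 1/((k:ℝ)+1) ≤ 1 := by
            rw [div_le_one (by positivity)]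
            linarith [Nat.cast_nonneg (α := ℝ) k]
          nlinarith
      have hni0 : ni = 0 := by
        by_contra hne
        have h1le : (1:ℝ) ≤ |(ni:ℝ)| := by
          have : (1:ℤ) ≤ |ni| := Int.one_le_abs (by exact_mod_cast hne)
          calc (1:ℝ) = ((1:ℤ):ℝ) := by norm_num
            _ ≤ ((|ni|:ℤ):ℝ) := by exact_mod_cast this
            _ = |(ni:ℝ)| := by push_cast; ring
        have hpi : (3:ℝ) < Real.pi := Real.pi_gt_three
        have habs : |θ₁ - θ₂| = |(ni:ℝ)| * (2*Real.pi) := by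
          have : θ₁ - θ₂ = ni * (2*Real.pi) := by linarith
          rw [this, abs_mul, abs_of_pos (by linarith : (0:ℝ) < 2*Real.pi)]
        nlinarith
      rw [hni0] at hreal
      push_cast at hreal
      linarith
    have hsub : (fun θ : ℝ => z * Complex.exp ((θ:ℂ) * Complex.I)) '' (Set.Ioo (0:ℝ) (1/(k+1)))
        ⊆ T := by
      rintro w ⟨θ, hθ, rfl⟩
      exact hc θ hθ
    exact hT.not_infinite (((Set.Ioo_infinite hk1).image hinj).mono hsub)
  choose θf hθmem hθT using hex
  refine ⟨fun k => z * Complex.exp ((θf k : ℂ) * Complex.I), fun k => ⟨?_, hθT k⟩, ?_⟩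
  · rw [norm_mul, hz, one_mul, Complex.norm_exp_ofReal_mul_I]
  · have hθ0 : Filter.Tendsto θf Filter.atTop (𝓝 (0:ℝ)) := by
      exact tendsto_of_tendsto_of_tendsto_of_le_of_le tendsto_const_nhds
        tendsto_one_div_add_atTop_nhds_zero_nat
        (fun k => (hθmem k).1.le) (fun k => (hθmem k).2.le)
    have hcont : Continuous (fun θ : ℝ => z * Complex.exp ((θ:ℂ) * Complex.I)) :=
      continuous_const.mul ((Complex.continuous_ofReal.mul continuous_const).cexp)
    have := (hcont.tendsto 0).comp hθ0
    simpa [Function.comp_def] using this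

lemma slice_not_root_of_norm_lt {p : MvPolynomial (Fin 2) ℂ} {τ z : ℂ}
    (h : (sliceP p τ).eval z ≠ 0) : ev p (τ, z) ≠ 0 := by
  rwa [sliceP_eval] at h

/-- If the whole slice `p(τ,·)` vanishes, then `z₁ - τ` would divide both `p` and `p̃`,
contradicting coprimality. -/
lemma slice_ne_zero {m n : ℕ} {p pt : MvPolynomial (Fin 2) ℂ} (hRIF : IsRIF2 m n p pt)
    {τ : ℂ} (hτ : ‖τ‖ = 1) : sliceP p τ ≠ 0 := by
  intro h0
  have hτ0 : τ ≠ 0 := by intro h; rw [h] at hτ; simp at hτ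
  have hpz : ∀ z : ℂ, ev p (τ, z) = 0 := fun z => by rw [← sliceP_eval, h0]; simp
  have hptz' : ∀ z : ℂ, z ≠ 0 → ev pt (τ, z) = 0 := by
    intro z hzne
    rw [hRIF.reflection (τ, z) hτ0 hzne]
    have h1 : ev p (((starRingEnd ℂ) τ)⁻¹, ((starRingEnd ℂ) z)⁻¹) = 0 := by
      rw [conj_inv_of_norm_one hτ]
      exact hpz _
    rw [h1]
    simp
  have hQt0 : sliceP pt τ = 0 := by
    apply Polynomial.eq_of_infinite_eval_eq
    apply Set.Infinite.mono (s := {(0:ℂ)}ᶜ)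
    · intro x hx
      simp only [Set.mem_setOf_eq, Polynomial.eval_zero]
      rw [sliceP_eval]
      exact hptz' x hx
    · exact Set.Finite.infinite_compl (Set.finite_singleton 0)
  have hptz : ∀ z : ℂ, ev pt (τ, z) = 0 := fun z => by rw [← sliceP_eval, hQt0]; simp
  have hdvd : ∀ q : MvPolynomial (Fin 2) ℂ, (∀ z : ℂ, ev q (τ, z) = 0) →
      (MvPolynomial.X 0 - MvPolynomial.C τ) ∣ q := by
    intro q hq
    have hroot : Polynomial.eval (MvPolynomial.C τ) (MvPolynomial.finSuccEquiv ℂ 1 q) = 0 := by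
      apply MvPolynomial.funext
      intro x
      have hcomm : MvPolynomial.eval x
            (Polynomial.eval (MvPolynomial.C τ) (MvPolynomial.finSuccEquiv ℂ 1 q))
          = Polynomial.eval τ
              ((MvPolynomial.finSuccEquiv ℂ 1 q).map (MvPolynomial.eval x)) := by
        rw [Polynomial.eval_map]
        rw [show Polynomial.eval (MvPolynomial.C τ) (MvPolynomial.finSuccEquiv ℂ 1 q)
            = Polynomial.eval₂ (RingHom.id _) (MvPolynomial.C τ)
                (MvPolynomial.finSuccEquiv ℂ 1 q) from rfl]
        rw [Polynomial.hom_eval₂]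
        simp
      rw [hcomm, ← MvPolynomial.eval_eq_eval_mv_eval']
      have harg : (Fin.cons τ x : Fin 2 → ℂ) = ![τ, x 0] := by
        funext i
        refine Fin.cases rfl ?_ i
        intro j
        fin_cases j
        rfl
      rw [harg]
      have := hq (x 0)
      simpa [ev] using this
    have hdvd1 : (Polynomial.X - Polynomial.C (MvPolynomial.C τ))
        ∣ MvPolynomial.finSuccEquiv ℂ 1 q :=
      Polynomial.dvd_iff_isRoot.mpr hroot
    obtain ⟨c, hc⟩ := hdvd1
    have hXC : MvPolynomial.finSuccEquiv ℂ 1 (MvPolynomial.X 0 - MvPolynomial.C τ)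
        = Polynomial.X - Polynomial.C (MvPolynomial.C τ) := by
      rw [map_sub, MvPolynomial.finSuccEquiv_X_zero]
      simp [MvPolynomial.finSuccEquiv_apply]
    refine Dvd.intro ((MvPolynomial.finSuccEquiv ℂ 1).symm c) ?_
    refine (MvPolynomial.finSuccEquiv ℂ 1).injective ?_
    rw [map_mul, hXC, AlgEquiv.apply_symm_apply]
    exact hc.symm
  have hunit := hRIF.coprime _ (hdvd p hpz) (hdvd pt hptz)
  have hmap := hunit.map (MvPolynomial.eval (![τ, 0] : Fin 2 → ℂ))
  rw [map_sub, MvPolynomial.eval_X, MvPolynomial.eval_C] at hmap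
  have h00 : (![τ, (0:ℂ)] : Fin 2 → ℂ) 0 = τ := rfl
  rw [h00, sub_self] at hmap
  exact not_isUnit_zero hmap

/-- The slice of the reflection, factored over the roots of the slice of `p`. -/
lemma Qt_factored {m n : ℕ} {p pt : MvPolynomial (Fin 2) ℂ}
    (href : IsReflection2 m n p pt) {τ : ℂ} (hτ : ‖τ‖ = 1)
    (L : ℂ) (s : Multiset ℂ) (hcard : Multiset.card s ≤ n)
    (hfac : sliceP p τ = Polynomial.C L * (s.map fun β => Polynomial.X - Polynomial.C β).prod) :
    sliceP pt τ = Polynomial.C (τ ^ m * (starRingEnd ℂ) L)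
      * Polynomial.X ^ (n - Multiset.card s)
      * (s.map fun β => 1 - Polynomial.C ((starRingEnd ℂ) β) * Polynomial.X).prod := by
  have hτ0 : τ ≠ 0 := by intro h; rw [h] at hτ; simp at hτ
  apply Polynomial.eq_of_infinite_eval_eq
  apply Set.Infinite.mono (s := {(0:ℂ)}ᶜ)
  swap
  · exact Set.Finite.infinite_compl (Set.finite_singleton 0)
  intro z hz
  have hz0 : z ≠ 0 := hz
  simp only [Set.mem_setOf_eq]
  rw [sliceP_eval, href (τ, z) hτ0 hz0, conj_inv_of_norm_one hτ]
  have hpe : ev p (τ, ((starRingEnd ℂ) z)⁻¹)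
      = L * (s.map fun β => ((starRingEnd ℂ) z)⁻¹ - β).prod := by
    rw [← sliceP_eval, hfac, Polynomial.eval_mul, Polynomial.eval_C,
      Polynomial.eval_multiset_prod, Multiset.map_map]
    congr 1
    refine congrArg Multiset.prod (Multiset.map_congr rfl ?_)
    intro β hβ
    simp [Function.comp]
  rw [hpe]
  rw [map_mul (starRingEnd ℂ), map_multiset_prod (starRingEnd ℂ), Multiset.map_map]
  have hconj : ∀ β ∈ s, ((starRingEnd ℂ) ∘ fun β => ((starRingEnd ℂ) z)⁻¹ - β) β
      = z⁻¹ - (starRingEnd ℂ) β := by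
    intro β hβ
    simp [Function.comp, map_inv₀]
  rw [Multiset.map_congr rfl hconj]
  -- now: τ^m * z^n * (conj L * (s.map fun β => z⁻¹ - conj β).prod)
  --    = (τ^m * conj L) * z^(n - card) * (s.map fun β => 1 - conj β * z).prod
  simp only [Polynomial.eval_mul, Polynomial.eval_C, Polynomial.eval_pow, Polynomial.eval_X,
    Polynomial.eval_multiset_prod, Multiset.map_map]
  have hmap2 : (Multiset.map (Polynomial.eval z ∘ fun β =>
        1 - Polynomial.C ((starRingEnd ℂ) β) * Polynomial.X) s)
      = Multiset.map (fun β => 1 - (starRingEnd ℂ) β * z) s := by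
    refine Multiset.map_congr rfl ?_
    intro β hβ
    simp [Function.comp]
  rw [hmap2]
  have hzn : z ^ n = z ^ (n - Multiset.card s) * z ^ (Multiset.card s) := by
    rw [← pow_add]
    congr 1
    omega
  rw [hzn]
  have hprodz : z ^ (Multiset.card s) * (Multiset.map (fun β => z⁻¹ - (starRingEnd ℂ) β) s).prod
      = (Multiset.map (fun β => 1 - (starRingEnd ℂ) β * z) s).prod := by
    have h1 : (Multiset.map (fun β => 1 - (starRingEnd ℂ) β * z) s)
        = Multiset.map (fun β => z * (z⁻¹ - (starRingEnd ℂ) β)) s := by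
      refine Multiset.map_congr rfl ?_
      intro β hβ
      rw [mul_sub, mul_inv_cancel₀ hz0]
      ring
    rw [h1, show (fun β => z * (z⁻¹ - (starRingEnd ℂ) β))
        = fun β => (fun _ => z) β * ((fun β => z⁻¹ - (starRingEnd ℂ) β) β) from rfl,
      Multiset.prod_map_mul]
    congr 1
    rw [Multiset.map_const', Multiset.prod_replicate]
  calc τ ^ m * (z ^ (n - Multiset.card s) * z ^ (Multiset.card s))
        * ((starRingEnd ℂ) L * (Multiset.map (fun β => z⁻¹ - (starRingEnd ℂ) β) s).prod)
      = τ ^ m * (starRingEnd ℂ) L * z ^ (n - Multiset.card s)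
        * (z ^ (Multiset.card s)
            * (Multiset.map (fun β => z⁻¹ - (starRingEnd ℂ) β) s).prod) := by ring
    _ = τ ^ m * (starRingEnd ℂ) L * z ^ (n - Multiset.card s)
        * (Multiset.map (fun β => 1 - (starRingEnd ℂ) β * z) s).prod := by rw [hprodz]

/-- If the reflection is a constant multiple of `p` along a full slice, the value is
exceptional. -/
lemma exceptional_of_const_slice {p pt : MvPolynomial (Fin 2) ℂ} {α τ : ℂ}
    (hτ : ‖τ‖ = 1) (hQ : sliceP p τ ≠ 0)
    (hconst : ∀ z : ℂ, ev pt (τ, z) = α * ev p (τ, z)) :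
    IsExceptional p pt α := by
  refine ⟨τ, hτ, Or.inl ?_⟩
  rintro ⟨z1, z2⟩ ⟨h1, h2⟩
  simp only at h1 h2
  have h1' : τ = z1 := h1.symm
  subst h1'
  by_cases hzp : ev p (τ, z2) = 0
  · obtain ⟨u, hu, hul⟩ := circle_seq_avoid z2 h2 {x : ℂ | (sliceP p τ).IsRoot x}
      (Polynomial.finite_setOf_isRoot hQ)
    refine mem_closure_of_tendsto
      (Filter.Tendsto.prodMk_nhds tendsto_const_nhds hul) ?_
    refine Filter.Eventually.of_forall (fun k => ?_)
    have hpk : ev p (τ, u k) ≠ 0 := by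
      have := (hu k).2
      rw [← sliceP_eval]
      exact fun hr => this hr
    refine mem_levelset_base ⟨hτ, (hu k).1⟩ hpk ?_
    rw [rif, hconst, mul_div_assoc, div_self hpk, mul_one]
  · apply subset_closure
    refine mem_levelset_base ⟨hτ, h2⟩ hzp ?_
    rw [rif, hconst, mul_div_assoc, div_self hzp, mul_one]


lemma eval_prod_one_sub (s : Multiset ℂ) (z : ℂ) :
    Polynomial.eval z (s.map fun β => 1 - Polynomial.C ((starRingEnd ℂ) β) * Polynomial.X).prod
      = (s.map fun β => 1 - (starRingEnd ℂ) β * z).prod := by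
  rw [Polynomial.eval_multiset_prod, Multiset.map_map]
  refine congrArg Multiset.prod (Multiset.map_congr rfl ?_)
  intro β hβ
  simp [Function.comp]

lemma eval_prod_X_sub (s : Multiset ℂ) (z : ℂ) :
    Polynomial.eval z (s.map fun β => Polynomial.X - Polynomial.C β).prod
      = (s.map fun β => z - β).prod := by
  rw [Polynomial.eval_multiset_prod, Multiset.map_map]
  refine congrArg Multiset.prod (Multiset.map_congr rfl ?_)
  intro β hβ
  simp [Function.comp]

lemma one_le_mprod (s : Multiset ℝ) (h : ∀ x ∈ s, 1 ≤ x) : 1 ≤ s.prod := by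
  induction s using Multiset.induction_on with
  | empty => simp
  | cons x s ih =>
      rw [Multiset.prod_cons]
      have h1 := h x (Multiset.mem_cons_self x s)
      have h2 := ih fun y hy => h y (Multiset.mem_cons_of_mem hy)
      nlinarith

lemma one_lt_mprod (s : Multiset ℝ) (h : ∀ x ∈ s, 1 ≤ x) {x₀ : ℝ} (hx₀ : x₀ ∈ s)
    (hgt : 1 < x₀) : 1 < s.prod := by
  obtain ⟨t, rfl⟩ := Multiset.exists_cons_of_mem hx₀
  rw [Multiset.prod_cons]
  have h2 := one_le_mprod t fun y hy => h y (Multiset.mem_cons_of_mem hy)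
  nlinarith

lemma normSq_ge_one {β : ℂ} (h : 1 ≤ ‖β‖) : 1 ≤ Complex.normSq β := by
  rw [Complex.normSq_eq_norm_sq]
  nlinarith [norm_nonneg β]

lemma sum_P_nonneg (y : ℂ) (s : Multiset ℂ) (hs : ∀ β ∈ s, 1 ≤ ‖β‖) :
    0 ≤ (s.map fun β => (Complex.normSq β - 1) / Complex.normSq (y - β)).sum := by
  refine Multiset.sum_nonneg ?_
  intro x hx
  obtain ⟨β, hβ, rfl⟩ := Multiset.mem_map.mp hx
  exact div_nonneg (by linarith [normSq_ge_one (hs β hβ)]) (Complex.normSq_nonneg _)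

end ClarkAux




/-- Let `φ = p̃/p` be a bidegree `(m,n)` RIF on `𝔻²` and let `α ∈ 𝕋`
be a generic value for which the weight-vanishing theorem applies (i.e. at every
singularity `(τ,γ)` of `φ` through which a branch `ζ₂ = g_j^α(ζ₁)` passes, the weight
`W_j^α` is comparable to `|ζ − τ|^{K_j}` near `τ` for an even positive integer `K_j`).
Then each Clark weight `W_j^α(ζ) = |∂φ/∂z₂(ζ, g_j^α(ζ))|⁻¹` is bounded on `𝕋`. -/
theorem clark_weight_bounded
    (m n : ℕ) (p pt : MvPolynomial (Fin 2) ℂ) (hRIF : IsRIF2 m n p pt)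
    (α : ℂ) (hα : ‖α‖ = 1) (hgen : IsGenericValue p pt α)
    (g : Fin n → ℂ → ℂ) (hg : IsGraphFamily n g)
    (hparam : levelSet2 p pt α = graphUnion n g)
    (hWV : ∀ τ γ : ℂ, (τ, γ) ∈ torus2 → ev p (τ, γ) = 0 → ev pt (τ, γ) = 0 →
      ∀ j : Fin n, g j τ = γ →
        ∃ K : ℕ, 0 < K ∧ Even K ∧
          ∃ c C : ℝ, 0 < c ∧ c ≤ C ∧
            ∃ δ : ℝ, 0 < δ ∧
              ∀ ζ : ℂ, ‖ζ‖ = 1 → ζ ≠ τ → ‖ζ - τ‖ < δ →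
                c ≤ ‖dphi2 p pt (ζ, g j ζ)‖⁻¹ / ‖ζ - τ‖ ^ K ∧
                ‖dphi2 p pt (ζ, g j ζ)‖⁻¹ / ‖ζ - τ‖ ^ K ≤ C) :
    ∀ j : Fin n, ∃ M : ℝ, ∀ ζ : ℂ, ‖ζ‖ = 1 →
      ‖dphi2 p pt (ζ, g j ζ)‖⁻¹ ≤ M := by
  classical
  obtain ⟨hg1, -⟩ := hg
  have hste := hRIF.stable
  have hdeg2 : MvPolynomial.degreeOf 1 p ≤ n := le_of_eq hRIF.deg2
  -- `p(τ,0) ≠ 0` for `τ` on the circle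
  have hp0 : ∀ τ : ℂ, ‖τ‖ = 1 → ev p (τ, 0) ≠ 0 := by
    intro τ hτ
    have h1 := ClarkAux.slice_ne_zero hRIF hτ
    have h2 := ClarkAux.slice_eval_ne_zero hste hdeg2 hτ h1 (a := 0) (by norm_num)
    rwa [ClarkAux.sliceP_eval] at h2
  -- the center value of each slice stays away from `α`
  have hne : ∀ τ : ℂ, ‖τ‖ = 1 → rif p pt (τ, 0) ≠ α := by
    intro τ hτ hval
    have hQ := ClarkAux.slice_ne_zero hRIF hτ
    have hsplit : Polynomial.Splits (ClarkAux.sliceP p τ) :=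
      IsAlgClosed.splits _
    set L := (ClarkAux.sliceP p τ).leadingCoeff with hL
    set s := (ClarkAux.sliceP p τ).roots with hsdef
    have hfac : ClarkAux.sliceP p τ
        = Polynomial.C L * (s.map fun β => Polynomial.X - Polynomial.C β).prod :=
      hsplit.eq_prod_roots
    have hcardn : Multiset.card s ≤ n := by
      rw [hsdef, (Polynomial.splits_iff_card_roots).mp hsplit]
      exact le_trans (ClarkAux.sliceP_natDegree_le p τ) hdeg2
    have hroots : ∀ β ∈ s, 1 ≤ ‖β‖ := ClarkAux.slice_roots_norm hste hdeg2 hτ hQ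
    have hQt := ClarkAux.Qt_factored hRIF.reflection hτ L s hcardn hfac
    have hLne : L ≠ 0 := Polynomial.leadingCoeff_ne_zero.mpr hQ
    have hp00 : ev p (τ, 0) ≠ 0 := hp0 τ hτ
    have hpt0 : ev pt (τ, 0)
        = τ ^ m * (starRingEnd ℂ) L * (0 : ℂ) ^ (n - Multiset.card s) := by
      rw [← ClarkAux.sliceP_eval, hQt]
      rw [Polynomial.eval_mul, Polynomial.eval_mul, Polynomial.eval_C, Polynomial.eval_pow,
        Polynomial.eval_X, ClarkAux.eval_prod_one_sub]
      have hcon : (s.map fun β => 1 - (starRingEnd ℂ) β * 0).prod = 1 := by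
        rw [show (fun β : ℂ => 1 - (starRingEnd ℂ) β * 0) = fun _ : ℂ => (1:ℂ) from
          by funext β; ring]
        rw [Multiset.map_const', Multiset.prod_replicate, one_pow]
      rw [hcon, mul_one]
    by_cases he : n - Multiset.card s = 0
    · -- slice degree is full
      have hpt0' : ev pt (τ, 0) = τ ^ m * (starRingEnd ℂ) L := by
        rw [hpt0, he, pow_zero, mul_one]
      have hp0fac : ev p (τ, 0) = L * (s.map fun β => (0:ℂ) - β).prod := by
        rw [← ClarkAux.sliceP_eval, hfac, Polynomial.eval_mul, Polynomial.eval_C,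
          ClarkAux.eval_prod_X_sub]
      by_cases hone : ∀ β ∈ s, ‖β‖ ≤ 1
      · -- all roots on the circle : the slice is constant and `α` is exceptional
        have hcirc : ∀ β ∈ s, (starRingEnd ℂ) β * β = 1 := by
          intro β hβ
          rw [ClarkAux.conj_mul_self β,
            ClarkAux.normSq_one_of_norm_one (le_antisymm (hone β hβ) (hroots β hβ))]
          norm_num
        set K : ℂ := (s.map fun β => -((starRingEnd ℂ) β)).prod with hK
        have hfactor : ∀ β ∈ s,
            (1 : Polynomial ℂ) - Polynomial.C ((starRingEnd ℂ) β) * Polynomial.X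
            = Polynomial.C (-((starRingEnd ℂ) β)) * (Polynomial.X - Polynomial.C β) := by
          intro β hβ
          rw [show (1 : Polynomial ℂ) = Polynomial.C ((starRingEnd ℂ) β * β) from
            by rw [hcirc β hβ, map_one]]
          rw [Polynomial.C_mul, map_neg]
          ring
        have hCK : (s.map fun β => Polynomial.C (-((starRingEnd ℂ) β))).prod
            = Polynomial.C K := by
          rw [hK, map_multiset_prod (Polynomial.C : ℂ →+* Polynomial ℂ), Multiset.map_map]
          rfl
        have hQtQ : ClarkAux.sliceP pt τ
            = Polynomial.C (τ ^ m * (starRingEnd ℂ) L * K * L⁻¹) * ClarkAux.sliceP p τ := by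
          rw [hQt, he, pow_zero, mul_one, Multiset.map_congr rfl hfactor]
          rw [show (fun β : ℂ => Polynomial.C (-((starRingEnd ℂ) β))
                * (Polynomial.X - Polynomial.C β))
              = fun β : ℂ => (fun γ : ℂ => Polynomial.C (-((starRingEnd ℂ) γ))) β
                * ((fun γ : ℂ => Polynomial.X - Polynomial.C γ) β) from rfl,
            Multiset.prod_map_mul, hCK, hfac]
          rw [← mul_assoc, ← mul_assoc, ← Polynomial.C_mul, ← Polynomial.C_mul]
          congr 2
          field_simp
        have hconst : ∀ z : ℂ, ev pt (τ, z)
            = (τ ^ m * (starRingEnd ℂ) L * K * L⁻¹) * ev p (τ, z) := by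
          intro z
          rw [← ClarkAux.sliceP_eval, hQtQ, Polynomial.eval_mul, Polynomial.eval_C,
            ClarkAux.sliceP_eval]
        have hc : τ ^ m * (starRingEnd ℂ) L * K * L⁻¹ = α := by
          rw [rif, hconst 0, mul_div_assoc, div_self hp00, mul_one] at hval
          exact hval
        refine hgen ?_
        refine ClarkAux.exceptional_of_const_slice hτ hQ ?_
        intro z
        rw [hconst z, hc]
      · -- some root strictly outside : `|rif(τ,0)| < 1`, impossible
        push_neg at hone
        obtain ⟨β₀, hβ₀mem, hβ₀⟩ := hone
        have h1 : ‖ev pt (τ, 0)‖ = ‖L‖ := by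
          rw [hpt0', norm_mul, norm_pow, hτ, one_pow, one_mul, RCLike.norm_conj]
        have h2 : ‖ev p (τ, 0)‖ = ‖L‖ * (s.map fun β => ‖β‖).prod := by
          rw [hp0fac, norm_mul, ClarkAux.norm_mprod, Multiset.map_map]
          congr 1
          refine congrArg Multiset.prod (Multiset.map_congr rfl ?_)
          intro β hβ
          simp [Function.comp]
        have h3 : 1 < (s.map fun β => ‖β‖).prod := by
          refine ClarkAux.one_lt_mprod _ ?_ (Multiset.mem_map_of_mem _ hβ₀mem) hβ₀
          intro x hx
          obtain ⟨β, hβ, rfl⟩ := Multiset.mem_map.mp hx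
          exact hroots β hβ
        have h4 : ‖rif p pt (τ, 0)‖ < 1 := by
          rw [rif, norm_div, h1, h2]
          have hd : 0 < ‖L‖ * (s.map fun β => ‖β‖).prod :=
            mul_pos (norm_pos_iff.mpr hLne) (lt_trans one_pos h3)
          rw [div_lt_one hd]
          nlinarith [norm_pos_iff.mpr hLne]
        rw [hval, hα] at h4
        linarith
    · -- degenerate slice degree : `rif(τ,0) = 0 ≠ α`
      have hzero : ev pt (τ, 0) = 0 := by
        rw [hpt0, zero_pow he, mul_zero]
      rw [rif, hzero, zero_div] at hval
      rw [← hval] at hα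
      simp at hα
  -- uniform lower bound by compactness
  have hcont : ContinuousOn (fun τ : ℂ => ‖α - rif p pt (τ, 0)‖) (Metric.sphere (0:ℂ) 1) := by
    refine ContinuousOn.norm (ContinuousOn.sub continuousOn_const ?_)
    have h1 : Continuous (fun τ : ℂ => ev pt (τ, 0)) :=
      (ClarkAux.ev_continuous pt).comp (continuous_id.prodMk continuous_const)
    have h2 : Continuous (fun τ : ℂ => ev p (τ, 0)) :=
      (ClarkAux.ev_continuous p).comp (continuous_id.prodMk continuous_const)
    refine ContinuousOn.div h1.continuousOn h2.continuousOn ?_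
    intro τ hτ
    exact hp0 τ (by rwa [mem_sphere_zero_iff_norm] at hτ)
  obtain ⟨τs, hτsmem, hmin'⟩ := (isCompact_sphere (0:ℂ) 1).exists_isMinOn
    ⟨1, by rw [mem_sphere_zero_iff_norm]; norm_num⟩ hcont
  have hmin := isMinOn_iff.mp hmin'
  set ε : ℝ := ‖α - rif p pt (τs, 0)‖ with hεdef
  clear_value ε
  have hε : 0 < ε := by
    rw [hεdef, norm_pos_iff]
    exact sub_ne_zero.mpr (Ne.symm (hne τs (mem_sphere_zero_iff_norm.mp hτsmem)))
  have hεle : ∀ ζ : ℂ, ‖ζ‖ = 1 → ε ≤ ‖α - rif p pt (ζ, 0)‖ := by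
    intro ζ h
    exact hmin ζ (mem_sphere_zero_iff_norm.mpr h)
  -- the uniform bound
  intro j
  refine ⟨2 / ε, ?_⟩
  intro ζ hζ
  set y : ℂ := g j ζ with hyd
  have hy : ‖y‖ = 1 := hg1 j ζ hζ
  by_cases hpy : ev p (ζ, y) = 0
  · have hzero : dphi2 p pt (ζ, y) = 0 := by
      rw [dphi2, hpy]
      norm_num
    rw [hzero, norm_zero, inv_zero]
    positivity
  -- main case : `(ζ, y)` is a regular point of the level set
  have hζ0 : ζ ≠ 0 := by intro h; rw [h] at hζ; simp at hζ
  have hy0 : y ≠ 0 := by intro h; rw [h] at hy; simp at hy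
  have hQ : ClarkAux.sliceP p ζ ≠ 0 := by
    intro h
    exact hpy (by rw [← ClarkAux.sliceP_eval, h]; simp)
  have hsplit : Polynomial.Splits (ClarkAux.sliceP p ζ) :=
    IsAlgClosed.splits _
  set L := (ClarkAux.sliceP p ζ).leadingCoeff with hL
  set s := (ClarkAux.sliceP p ζ).roots with hsdef
  have hfac : ClarkAux.sliceP p ζ
      = Polynomial.C L * (s.map fun β => Polynomial.X - Polynomial.C β).prod :=
    hsplit.eq_prod_roots
  have hcardn : Multiset.card s ≤ n := by
    rw [hsdef, (Polynomial.splits_iff_card_roots).mp hsplit]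
    exact le_trans (ClarkAux.sliceP_natDegree_le p ζ) hdeg2
  have hroots : ∀ β ∈ s, 1 ≤ ‖β‖ := ClarkAux.slice_roots_norm hste hdeg2 hζ hQ
  have hQt := ClarkAux.Qt_factored hRIF.reflection hζ L s hcardn hfac
  have hLne : L ≠ 0 := Polynomial.leadingCoeff_ne_zero.mpr hQ
  have hQyne : Polynomial.eval y (ClarkAux.sliceP p ζ) ≠ 0 := by
    rwa [ClarkAux.sliceP_eval]
  have hys : ∀ β ∈ s, β ≠ y := by
    intro β hβ hβy
    have : (ClarkAux.sliceP p ζ).IsRoot β := (Polynomial.mem_roots'.mp hβ).2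
    rw [hβy] at this
    exact hQyne this
  -- the level-set value at `(ζ, y)`
  have hval2 : rif p pt (ζ, y) = α := by
    refine ClarkAux.rif_eq_of_mem_levelSet ?_ hpy
    rw [hparam]
    exact Set.mem_iUnion.mpr ⟨j, ⟨hζ, hyd⟩⟩
  -- norms of `p` and `p̃` agree on the torus
  have hnormeq : ‖ev pt (ζ, y)‖ = ‖ev p (ζ, y)‖ := by
    rw [hRIF.reflection (ζ, y) hζ0 hy0]
    simp only
    rw [ClarkAux.conj_inv_of_norm_one hζ, ClarkAux.conj_inv_of_norm_one hy]
    rw [norm_mul, norm_mul, norm_pow, norm_pow, hζ, hy, one_pow, one_pow, one_mul, one_mul,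
      RCLike.norm_conj]
  -- the Wronskian identity
  set U : ℝ := ((n - Multiset.card s : ℕ) : ℝ)
    + (s.map fun β => (Complex.normSq β - 1) / Complex.normSq (y - β)).sum with hUdef
  have hU0 : 0 ≤ U := by
    rw [hUdef]
    have := ClarkAux.sum_P_nonneg y s hroots
    positivity
  have hW := ClarkAux.wronskian_eval L (ζ ^ m * (starRingEnd ℂ)  L) y
    (n - Multiset.card s) hy s hys
  have e1 : Polynomial.eval y (Polynomial.derivative
        (Polynomial.C (ζ ^ m * (starRingEnd ℂ) L)
          * Polynomial.X ^ (n - Multiset.card s)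
          * (s.map fun β => 1 - Polynomial.C ((starRingEnd ℂ) β) * Polynomial.X).prod))
      = ev (MvPolynomial.pderiv 1 pt) (ζ, y) := by
    rw [← hQt, ClarkAux.sliceP_derivative, ClarkAux.sliceP_eval]
  have e2 : Polynomial.eval y (Polynomial.derivative
        (Polynomial.C L * (s.map fun β => Polynomial.X - Polynomial.C β).prod))
      = ev (MvPolynomial.pderiv 1 p) (ζ, y) := by
    rw [← hfac, ClarkAux.sliceP_derivative, ClarkAux.sliceP_eval]
  have e3 : Polynomial.eval y
        (Polynomial.C (ζ ^ m * (starRingEnd ℂ) L)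
          * Polynomial.X ^ (n - Multiset.card s)
          * (s.map fun β => 1 - Polynomial.C ((starRingEnd ℂ) β) * Polynomial.X).prod)
      = ev pt (ζ, y) := by
    rw [← hQt, ClarkAux.sliceP_eval]
  have e4 : Polynomial.eval y
        (Polynomial.C L * (s.map fun β => Polynomial.X - Polynomial.C β).prod)
      = ev p (ζ, y) := by
    rw [← hfac, ClarkAux.sliceP_eval]
  rw [e1, e2, e3, e4] at hW
  -- `‖∂φ/∂z₂(ζ,y)‖ = U`
  have hdnorm : ‖dphi2 p pt (ζ, y)‖ = U := by
    have hN : ‖ev (MvPolynomial.pderiv 1 pt) (ζ, y) * ev p (ζ, y)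
        - ev pt (ζ, y) * ev (MvPolynomial.pderiv 1 p) (ζ, y)‖
        = ‖ev p (ζ, y)‖ ^ 2 * U := by
      have h5 : ‖y * (ev (MvPolynomial.pderiv 1 pt) (ζ, y) * ev p (ζ, y)
          - ev pt (ζ, y) * ev (MvPolynomial.pderiv 1 p) (ζ, y))‖
          = ‖ev (MvPolynomial.pderiv 1 pt) (ζ, y) * ev p (ζ, y)
          - ev pt (ζ, y) * ev (MvPolynomial.pderiv 1 p) (ζ, y)‖ := by
        rw [norm_mul, hy, one_mul]
      rw [← h5, hW, norm_mul, norm_mul, hnormeq, Complex.norm_real, Real.norm_eq_abs,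
        abs_of_nonneg (by rw [← hUdef] at *; exact hU0)]
      rw [← hUdef]
      ring
    rw [dphi2, norm_div, hN, norm_pow, mul_comm, mul_div_assoc,
      div_self (pow_ne_zero 2 (norm_ne_zero_iff.mpr hpy)), mul_one]
  -- lower bound for `U`
  have hUlow : ε ≤ 2 * U := by
    have hp0fac : ev p (ζ, 0) = L * (s.map fun β => (0:ℂ) - β).prod := by
      rw [← ClarkAux.sliceP_eval, hfac, Polynomial.eval_mul, Polynomial.eval_C,
        ClarkAux.eval_prod_X_sub]
    have hpt0 : ev pt (ζ, 0)
        = ζ ^ m * (starRingEnd ℂ) L * (0 : ℂ) ^ (n - Multiset.card s) := by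
      rw [← ClarkAux.sliceP_eval, hQt]
      rw [Polynomial.eval_mul, Polynomial.eval_mul, Polynomial.eval_C, Polynomial.eval_pow,
        Polynomial.eval_X, ClarkAux.eval_prod_one_sub]
      have hcon : (s.map fun β => 1 - (starRingEnd ℂ) β * 0).prod = 1 := by
        rw [show (fun β : ℂ => 1 - (starRingEnd ℂ) β * 0) = fun _ : ℂ => (1:ℂ) from
          by funext β; ring]
        rw [Multiset.map_const', Multiset.prod_replicate, one_pow]
      rw [hcon, mul_one]
    by_cases he : n - Multiset.card s = 0
    · -- full slice degree : telescoping estimate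
      have hUs : U = (s.map fun β => (Complex.normSq β - 1) / Complex.normSq (y - β)).sum := by
        rw [hUdef, he, Nat.cast_zero, zero_add]
      have hpt0' : ev pt (ζ, 0) = ζ ^ m * (starRingEnd ℂ) L := by
        rw [hpt0, he, pow_zero, mul_one]
      have hpt_y : ev pt (ζ, y)
          = ζ ^ m * (starRingEnd ℂ) L * (s.map fun β => 1 - (starRingEnd ℂ) β * y).prod := by
        rw [← ClarkAux.sliceP_eval, hQt, he, pow_zero, mul_one, Polynomial.eval_mul,
          Polynomial.eval_C, ClarkAux.eval_prod_one_sub]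
      have hp_y : ev p (ζ, y) = L * (s.map fun β => y - β).prod := by
        rw [← ClarkAux.sliceP_eval, hfac, Polynomial.eval_mul, Polynomial.eval_C,
          ClarkAux.eval_prod_X_sub]
      have hprodyne : (s.map fun β => y - β).prod ≠ 0 := by
        intro h
        rw [hp_y, h, mul_zero] at hpy
        exact hpy rfl
      have hβ0 : ∀ β ∈ s, β ≠ 0 := by
        intro β hβ h0
        have h1 := hroots β hβ
        rw [h0] at h1
        norm_num at h1
      have hprodnegne : (s.map fun β => -β).prod ≠ 0 := by
        refine Multiset.prod_ne_zero ?_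
        intro h0
        obtain ⟨β, hβ, hβeq⟩ := Multiset.mem_map.mp h0
        exact hβ0 β hβ (neg_eq_zero.mp hβeq)
      have hαval : α = (ζ ^ m * (starRingEnd ℂ) L / L)
          * (s.map fun β => (1 - (starRingEnd ℂ) β * y) / (y - β)).prod := by
        rw [← hval2, rif, hpt_y, hp_y, Multiset.prod_map_div]
        field_simp
        simp only [mul_comm y]
      have hhval : rif p pt (ζ, 0) = (ζ ^ m * (starRingEnd ℂ) L / L)
          * (s.map fun β => -β⁻¹).prod := by
        have hBinv : (s.map fun β => -β⁻¹).prod = ((s.map fun β => -β).prod)⁻¹ := by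
          rw [show (fun β : ℂ => -β⁻¹) = fun β : ℂ => (-β)⁻¹ from by funext β; rw [inv_neg],
            Multiset.prod_map_inv]
        have h0fac : (s.map fun β => (0:ℂ) - β) = (s.map fun β => -β) := by
          refine Multiset.map_congr rfl ?_
          intro β hβ
          rw [zero_sub]
        rw [rif, hpt0', hp0fac, h0fac, hBinv]
        field_simp
      have hdiff : α - rif p pt (ζ, 0) = (ζ ^ m * (starRingEnd ℂ) L / L)
          * ((s.map fun β => (1 - (starRingEnd ℂ) β * y) / (y - β)).prod
            - (s.map fun β => -β⁻¹).prod) := by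
        rw [hαval, hhval]
        ring
      have hEnorm : ‖ζ ^ m * (starRingEnd ℂ) L / L‖ = 1 := by
        rw [norm_div, norm_mul, norm_pow, hζ, one_pow, one_mul, RCLike.norm_conj,
          div_self (norm_ne_zero_iff.mpr hLne)]
      have htel := ClarkAux.telescope_bound y hy s (fun β hβ => ⟨hroots β hβ, hys β hβ⟩)
      calc ε ≤ ‖α - rif p pt (ζ, 0)‖ := hεle ζ hζ
        _ = ‖(s.map fun β => (1 - (starRingEnd ℂ) β * y) / (y - β)).prod
            - (s.map fun β => -β⁻¹).prod‖ := by
            rw [hdiff, norm_mul, hEnorm, one_mul]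
        _ ≤ 2 * (s.map fun β => (Complex.normSq β - 1) / Complex.normSq (y - β)).sum := htel
        _ = 2 * U := by rw [hUs]
    · -- degree drop : `U ≥ 1` while `‖α - rif(ζ,0)‖ ≤ 2`
      have hzero : ev pt (ζ, 0) = 0 := by
        rw [hpt0, zero_pow he, mul_zero]
      have hrif0 : rif p pt (ζ, 0) = 0 := by
        rw [rif, hzero, zero_div]
      have hU1 : (1:ℝ) ≤ U := by
        rw [hUdef]
        have h1 : (1:ℝ) ≤ ((n - Multiset.card s : ℕ) : ℝ) := by
          have : 1 ≤ n - Multiset.card s := Nat.one_le_iff_ne_zero.mpr he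
          exact_mod_cast this
        have h2 := ClarkAux.sum_P_nonneg y s hroots
        linarith
      calc ε ≤ ‖α - rif p pt (ζ, 0)‖ := hεle ζ hζ
        _ = 1 := by rw [hrif0, sub_zero, hα]
        _ ≤ 2 * U := by linarith
  -- conclusion
  rw [hdnorm]
  clear_value U
  have hU2 : ε / 2 ≤ U := by linarith
  have hUpos : 0 < U := lt_of_lt_of_le (by positivity) hU2
  calc U⁻¹ ≤ (ε / 2)⁻¹ := by
        exact inv_anti₀ (by positivity) hU2
    _ = 2 / ε := by rw [inv_div]
end
end

section
/- Let φ = p̃/p be a bidegree (m,n) rational inner function on 𝔻², let α ∈ 𝕋, and suppose the vertical line {ζ ∈ 𝕋² : ζ₁ = τ} is contained in C_α(φ), so that d := ∂φ/∂z₁(τ, z₂) is a nonzero constant independent of z₂ ∈ 𝔻. Then for every fixed z₂ ∈ 𝔻, lim_{r→1⁻} (1−r)·(1−|φ(rτ, z₂)|²)/|α − φ(rτ, z₂)|² = 2/|d|. -/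
open MeasureTheory Complex Filter Topology

noncomputable section

namespace LineMassAux
open MvPolynomial

lemma fin2cases (i : Fin 2) : i = 0 ∨ i = 1 :=
  match i with | 0 => Or.inl rfl | 1 => Or.inr rfl

lemma ev_C (a : ℂ) (z : ℂ × ℂ) : ev (C a) z = a := by simp [ev]
lemma ev_one (z : ℂ × ℂ) : ev 1 z = 1 := by simp [ev]
lemma ev_add (q r : MvPolynomial (Fin 2) ℂ) (z : ℂ × ℂ) :
    ev (q + r) z = ev q z + ev r z := by simp [ev]
lemma ev_mul (q r : MvPolynomial (Fin 2) ℂ) (z : ℂ × ℂ) :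
    ev (q * r) z = ev q z * ev r z := by simp [ev]
lemma ev_X0 (z : ℂ × ℂ) : ev (X 0) z = z.1 := by simp [ev]
lemma ev_X1 (z : ℂ × ℂ) : ev (X 1) z = z.2 := by simp [ev]

lemma pd_X0 : pderiv (0 : Fin 2) (X 0) = (1 : MvPolynomial (Fin 2) ℂ) := pderiv_X_self 0
lemma pd_X1 : pderiv (0 : Fin 2) (X 1) = (0 : MvPolynomial (Fin 2) ℂ) := by
  rw [pderiv_X_of_ne]; decide

lemma continuous_ev (q : MvPolynomial (Fin 2) ℂ) : Continuous (ev q) := by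
  induction q using MvPolynomial.induction_on with
  | C a =>
      rw [show ev (C a) = fun _ : ℂ × ℂ => a from funext fun z => by rw [ev_C]]
      exact continuous_const
  | add q r hq hr =>
      rw [show ev (q + r) = fun z => ev q z + ev r z from funext fun z => by rw [ev_add]]
      exact hq.add hr
  | mul_X q i hq =>
      rcases fin2cases i with rfl | rfl
      · rw [show ev (q * X 0) = fun z => ev q z * z.1 from
          funext fun z => by rw [ev_mul, ev_X0]]
        exact hq.mul continuous_fst
      · rw [show ev (q * X 1) = fun z => ev q z * z.2 from
          funext fun z => by rw [ev_mul, ev_X1]]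
        exact hq.mul continuous_snd

lemma hasDerivAt_ev (q : MvPolynomial (Fin 2) ℂ) (w z₀ : ℂ) :
    HasDerivAt (fun z => ev q (z, w)) (ev (pderiv 0 q) (z₀, w)) z₀ := by
  induction q using MvPolynomial.induction_on with
  | C a =>
      have : (fun z => ev (C a) (z, w)) = fun _ => a := funext fun z => by rw [ev_C]
      rw [this, pderiv_C, show ev 0 (z₀, w) = 0 by simp [ev]]
      exact hasDerivAt_const z₀ a
  | add q r hq hr =>
      have h := hq.add hr
      have e1 : (fun z => ev (q + r) (z, w)) = fun z => ev q (z, w) + ev r (z, w) :=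
        funext fun z => by rw [ev_add]
      rw [e1, map_add, ev_add]
      exact h
  | mul_X q i hq =>
      rcases fin2cases i with rfl | rfl
      · have h := hq.mul (hasDerivAt_id z₀)
        have e1 : (fun z => ev (q * X 0) (z, w)) = fun z => ev q (z, w) * z := by
          funext z; rw [ev_mul, ev_X0]
        have e2 : ev (pderiv 0 (q * X 0)) (z₀, w)
            = ev (pderiv 0 q) (z₀, w) * z₀ + ev q (z₀, w) := by
          rw [pderiv_mul, pd_X0, ev_add, ev_mul, ev_mul, ev_X0, ev_one]; ring
        rw [e1, e2]
        simpa [Pi.mul_def] using h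
      · have h := hq.mul_const w
        have e1 : (fun z => ev (q * X 1) (z, w)) = fun z => ev q (z, w) * w := by
          funext z; rw [ev_mul, ev_X1]
        have e2 : ev (pderiv 0 (q * X 1)) (z₀, w) = ev (pderiv 0 q) (z₀, w) * w := by
          rw [pderiv_mul, pd_X1, ev_add, ev_mul, ev_mul, ev_X1,
            show ev 0 (z₀, w) = 0 by simp [ev]]
          ring
        rw [e1, e2]
        exact h

lemma hasDerivAt_ev_conj (q : MvPolynomial (Fin 2) ℂ) (w z₀ : ℂ) :
    HasDerivAt (fun z => (starRingEnd ℂ) (ev q ((starRingEnd ℂ) z, w)))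
      ((starRingEnd ℂ) (ev (pderiv 0 q) ((starRingEnd ℂ) z₀, w))) z₀ := by
  induction q using MvPolynomial.induction_on with
  | C a =>
      have : (fun z => (starRingEnd ℂ) (ev (C a) ((starRingEnd ℂ) z, w)))
          = fun _ => (starRingEnd ℂ) a := funext fun z => by rw [ev_C]
      rw [this, pderiv_C, show ev 0 ((starRingEnd ℂ) z₀, w) = 0 by simp [ev], map_zero]
      exact hasDerivAt_const z₀ _
  | add q r hq hr =>
      have h := hq.add hr
      have e1 : (fun z => (starRingEnd ℂ) (ev (q + r) ((starRingEnd ℂ) z, w)))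
          = fun z => (starRingEnd ℂ) (ev q ((starRingEnd ℂ) z, w))
            + (starRingEnd ℂ) (ev r ((starRingEnd ℂ) z, w)) :=
        funext fun z => by rw [ev_add, map_add]
      rw [e1, map_add, ev_add, map_add]
      exact h
  | mul_X q i hq =>
      rcases fin2cases i with rfl | rfl
      · have h := hq.mul (hasDerivAt_id z₀)
        have e1 : (fun z => (starRingEnd ℂ) (ev (q * X 0) ((starRingEnd ℂ) z, w)))
            = fun z => (starRingEnd ℂ) (ev q ((starRingEnd ℂ) z, w)) * z := by
          funext z; rw [ev_mul, ev_X0, map_mul, Complex.conj_conj]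
        have e2 : (starRingEnd ℂ) (ev (pderiv 0 (q * X 0)) ((starRingEnd ℂ) z₀, w))
            = (starRingEnd ℂ) (ev (pderiv 0 q) ((starRingEnd ℂ) z₀, w)) * z₀
              + (starRingEnd ℂ) (ev q ((starRingEnd ℂ) z₀, w)) := by
          rw [pderiv_mul, pd_X0, ev_add, ev_mul, ev_mul, ev_X0, ev_one, map_add,
            map_mul, map_mul, Complex.conj_conj, map_one, mul_one]
        rw [e1, e2]
        simpa [Pi.mul_def] using h
      · have h := hq.mul_const ((starRingEnd ℂ) w)
        have e1 : (fun z => (starRingEnd ℂ) (ev (q * X 1) ((starRingEnd ℂ) z, w)))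
            = fun z => (starRingEnd ℂ) (ev q ((starRingEnd ℂ) z, w)) * (starRingEnd ℂ) w := by
          funext z; rw [ev_mul, ev_X1, map_mul]
        have e2 : (starRingEnd ℂ) (ev (pderiv 0 (q * X 1)) ((starRingEnd ℂ) z₀, w))
            = (starRingEnd ℂ) (ev (pderiv 0 q) ((starRingEnd ℂ) z₀, w)) * (starRingEnd ℂ) w := by
          rw [pderiv_mul, pd_X1]
          simp [ev_add, ev_mul, ev_X1, ev]
        rw [e1, e2]
        exact h

end LineMassAux
namespace LineMassAux
open MvPolynomial

/-- One-variable polynomial in the first coordinate, second coordinate frozen at `w`. -/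
noncomputable def polyFst (q : MvPolynomial (Fin 2) ℂ) (w : ℂ) : Polynomial ℂ :=
  Polynomial.map (MvPolynomial.eval fun _ : Fin 1 => w) (MvPolynomial.finSuccEquiv ℂ 1 q)

lemma polyFst_eval (q : MvPolynomial (Fin 2) ℂ) (w z : ℂ) :
    (polyFst q w).eval z = ev q (z, w) := by
  have hv : (Fin.cons z (fun _ : Fin 1 => w) : Fin 2 → ℂ) = ![z, w] := by
    funext i; fin_cases i <;> rfl
  have h := MvPolynomial.eval_eq_eval_mv_eval' (fun _ : Fin 1 => w) z q
  rw [hv] at h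
  exact h.symm

lemma polyFst_natDegree (q : MvPolynomial (Fin 2) ℂ) (w : ℂ) :
    (polyFst q w).natDegree ≤ MvPolynomial.degreeOf 0 q :=
  le_trans Polynomial.natDegree_map_le (le_of_eq (MvPolynomial.natDegree_finSuccEquiv q))

/-- One-variable polynomial in the second coordinate, first coordinate frozen at `z`. -/
noncomputable def polySnd (q : MvPolynomial (Fin 2) ℂ) (z : ℂ) : Polynomial ℂ :=
  polyFst (MvPolynomial.rename (Equiv.swap 0 1) q) z

lemma polySnd_eval (q : MvPolynomial (Fin 2) ℂ) (z y : ℂ) :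
    (polySnd q z).eval y = ev q (z, y) := by
  rw [polySnd, polyFst_eval, ev, ev, MvPolynomial.eval_rename]
  have hv : (![(y, z).1, (y, z).2] ∘ ⇑(Equiv.swap (0 : Fin 2) 1)) = ![z, y] := by
    funext i; fin_cases i <;> simp [Equiv.swap_apply_left, Equiv.swap_apply_right]
  rw [hv]

/-- `‖1 - a * conj y‖ ≤ ‖y - a‖` when `1 ≤ ‖a‖` and `‖y‖ ≤ 1`. -/
lemma norm_one_sub_mul_conj_le (a y : ℂ) (ha : 1 ≤ ‖a‖) (hy : ‖y‖ ≤ 1) :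
    ‖1 - a * (starRingEnd ℂ) y‖ ≤ ‖y - a‖ := by
  have h1 : Complex.normSq (y - a) - Complex.normSq (1 - a * (starRingEnd ℂ) y)
      = (Complex.normSq a - 1) * (1 - Complex.normSq y) := by
    simp only [Complex.normSq_apply, Complex.sub_re, Complex.sub_im, Complex.mul_re,
      Complex.mul_im, Complex.conj_re, Complex.conj_im, Complex.one_re, Complex.one_im]
    ring
  have hna : ‖a‖ ^ 2 = Complex.normSq a := by
    exact Complex.sq_norm a
  have hny : ‖y‖ ^ 2 = Complex.normSq y := by
    exact Complex.sq_norm y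
  have ha' : 1 ≤ Complex.normSq a := by nlinarith [ha]
  have hy' : Complex.normSq y ≤ 1 := by nlinarith [hy, norm_nonneg y]
  have h2 : Complex.normSq (1 - a * (starRingEnd ℂ) y) ≤ Complex.normSq (y - a) := by
    nlinarith [h1]
  calc ‖1 - a * (starRingEnd ℂ) y‖ = Real.sqrt (Complex.normSq (1 - a * (starRingEnd ℂ) y)) := by
        rw [Complex.norm_def]
    _ ≤ Real.sqrt (Complex.normSq (y - a)) := Real.sqrt_le_sqrt h2
    _ = ‖y - a‖ := by rw [Complex.norm_def]

/-- Reflection bound for one-variable polynomials with no roots in the open disk. -/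
lemma norm_refl_aux : ∀ (k : ℕ) (Q : Polynomial ℂ), Q.natDegree = k →
    (∀ a : ℂ, Q.IsRoot a → 1 ≤ ‖a‖) → ∀ y : ℂ, ‖y‖ ≤ 1 → y ≠ 0 →
    ‖y‖ ^ k * ‖Q.eval (((starRingEnd ℂ) y)⁻¹)‖ ≤ ‖Q.eval y‖ := by
  intro k
  induction k with
  | zero =>
      intro Q hdeg _ y hy hy0
      obtain ⟨a, rfl⟩ := Polynomial.natDegree_eq_zero.mp hdeg
      simp
  | succ j ih =>
      intro Q hdeg hroots y hy hy0
      have hQ0 : Q ≠ 0 := fun h => by simp [h] at hdeg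
      have hdegpos : 0 < Q.degree := by
        rw [Polynomial.degree_eq_natDegree hQ0, hdeg]
        exact_mod_cast Nat.succ_pos j
      obtain ⟨a, ha⟩ := Complex.exists_root hdegpos
      obtain ⟨R, rfl⟩ := Polynomial.dvd_iff_isRoot.mpr ha
      have hX : (Polynomial.X - Polynomial.C a) ≠ 0 := Polynomial.X_sub_C_ne_zero a
      have hR0 : R ≠ 0 := fun h => hQ0 (by rw [h, mul_zero])
      have hdegR : R.natDegree = j := by
        have := Polynomial.natDegree_mul hX hR0
        rw [Polynomial.natDegree_X_sub_C] at this
        omega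
      have hrootsR : ∀ b : ℂ, R.IsRoot b → 1 ≤ ‖b‖ := by
        intro b hb
        exact hroots b (by simp [Polynomial.IsRoot, hb.eq_zero])
      have hihR := ih R hdegR hrootsR y hy hy0
      have hay : 1 ≤ ‖a‖ := hroots a (by simp [Polynomial.IsRoot])
      -- key factor computation
      have hyc : (starRingEnd ℂ) y ≠ 0 := by simpa using hy0
      have hfac : ‖y‖ * ‖(((starRingEnd ℂ) y)⁻¹ - a)‖ = ‖1 - a * (starRingEnd ℂ) y‖ := by
        rw [← norm_mul]
        have hmul : y * (((starRingEnd ℂ) y)⁻¹ - a)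
            = (1 - a * (starRingEnd ℂ) y) * (y * ((starRingEnd ℂ) y)⁻¹) := by
          field_simp
        have hunit : ‖y * ((starRingEnd ℂ) y)⁻¹‖ = 1 := by
          rw [norm_mul, norm_inv]
          simp only [RCLike.norm_conj]
          exact mul_inv_cancel₀ (by simpa using hy0)
        rw [hmul, norm_mul, hunit, mul_one]
      have hkey : ‖y‖ * ‖(((starRingEnd ℂ) y)⁻¹ - a)‖ ≤ ‖y - a‖ := by
        rw [hfac]; exact norm_one_sub_mul_conj_le a y hay hy
      have e1 : ((Polynomial.X - Polynomial.C a) * R).eval y = (y - a) * R.eval y := by simp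
      have e2 : ((Polynomial.X - Polynomial.C a) * R).eval (((starRingEnd ℂ) y)⁻¹)
          = (((starRingEnd ℂ) y)⁻¹ - a) * R.eval (((starRingEnd ℂ) y)⁻¹) := by simp
      rw [e1, e2]
      have expand : ‖y‖ ^ (j + 1) * ‖(((starRingEnd ℂ) y)⁻¹ - a) * R.eval (((starRingEnd ℂ) y)⁻¹)‖
          = (‖y‖ * ‖(((starRingEnd ℂ) y)⁻¹ - a)‖) * (‖y‖ ^ j * ‖R.eval (((starRingEnd ℂ) y)⁻¹)‖) := by
        rw [norm_mul]; ring
      rw [expand, norm_mul]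
      exact mul_le_mul hkey hihR (by positivity) (norm_nonneg _)

lemma norm_refl_le (Q : Polynomial ℂ) (hroots : ∀ a : ℂ, Q.IsRoot a → 1 ≤ ‖a‖)
    (M : ℕ) (hM : Q.natDegree ≤ M) (y : ℂ) (hy : ‖y‖ ≤ 1) (hy0 : y ≠ 0) :
    ‖y‖ ^ M * ‖Q.eval (((starRingEnd ℂ) y)⁻¹)‖ ≤ ‖Q.eval y‖ := by
  have h1 : ‖y‖ ^ M ≤ ‖y‖ ^ Q.natDegree := pow_le_pow_of_le_one (norm_nonneg y) hy hM
  calc ‖y‖ ^ M * ‖Q.eval (((starRingEnd ℂ) y)⁻¹)‖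
      ≤ ‖y‖ ^ Q.natDegree * ‖Q.eval (((starRingEnd ℂ) y)⁻¹)‖ :=
        mul_le_mul_of_nonneg_right h1 (norm_nonneg _)
    _ ≤ ‖Q.eval y‖ := norm_refl_aux Q.natDegree Q rfl hroots y hy hy0

end LineMassAux
namespace LineMassAux

lemma conj_inv_unit {ζ : ℂ} (h : ‖ζ‖ = 1) : ((starRingEnd ℂ) ζ)⁻¹ = ζ := by
  have h1 : (starRingEnd ℂ) ζ * ζ = 1 := by
    rw [mul_comm, Complex.mul_conj]
    norm_cast
    rw [← Complex.sq_norm, h, one_pow]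
  exact inv_eq_of_mul_eq_one_right h1

lemma unit_ne_zero {ζ : ℂ} (h : ‖ζ‖ = 1) : ζ ≠ 0 := by
  intro h0; rw [h0] at h; simp at h

/-- `|p̃| = |p|` on the torus. -/
lemma torus_norm_eq {m n : ℕ} {p pt : MvPolynomial (Fin 2) ℂ}
    (hrefl : IsReflection2 m n p pt) {ζ₁ ζ₂ : ℂ} (h1 : ‖ζ₁‖ = 1) (h2 : ‖ζ₂‖ = 1) :
    ‖ev pt (ζ₁, ζ₂)‖ = ‖ev p (ζ₁, ζ₂)‖ := by
  have h := hrefl (ζ₁, ζ₂) (unit_ne_zero h1) (unit_ne_zero h2)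
  simp only at h
  rw [conj_inv_unit h1, conj_inv_unit h2] at h
  rw [h, norm_mul, norm_mul, norm_pow, norm_pow, h1, h2, one_pow, one_pow, one_mul, one_mul,
    RCLike.norm_conj]

/-- Reflection bound in the first variable, second coordinate inside the disk. -/
lemma refl_bound_fst {m n : ℕ} {p pt : MvPolynomial (Fin 2) ℂ} (hRIF : IsRIF2 m n p pt)
    {w : ℂ} (hw : ‖w‖ < 1) {y : ℂ} (hy : ‖y‖ ≤ 1) (hy0 : y ≠ 0) :
    ‖y‖ ^ m * ‖ev p (((starRingEnd ℂ) y)⁻¹, w)‖ ≤ ‖ev p (y, w)‖ := by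
  have hroots : ∀ a : ℂ, (polyFst p w).IsRoot a → 1 ≤ ‖a‖ := by
    intro a haroot
    by_contra hlt
    push_neg at hlt
    exact hRIF.stable (a, w) ⟨hlt, hw⟩ (by rw [← polyFst_eval]; exact haroot)
  have hdeg : (polyFst p w).natDegree ≤ m := by
    rw [← hRIF.deg1]; exact polyFst_natDegree p w
  have := norm_refl_le (polyFst p w) hroots m hdeg y hy hy0
  rwa [polyFst_eval, polyFst_eval] at this

/-- Reflection bound in the first variable, second coordinate on the circle (by continuity). -/
lemma refl_bound_fst_boundary {m n : ℕ} {p pt : MvPolynomial (Fin 2) ℂ} (hRIF : IsRIF2 m n p pt)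
    {ζ : ℂ} (hζ : ‖ζ‖ = 1) {y : ℂ} (hy : ‖y‖ ≤ 1) (hy0 : y ≠ 0) :
    ‖y‖ ^ m * ‖ev p (((starRingEnd ℂ) y)⁻¹, ζ)‖ ≤ ‖ev p (y, ζ)‖ := by
  have hmem : Set.Ioo (0 : ℝ) 1 ∈ 𝓝[<] (1 : ℝ) :=
    Ioo_mem_nhdsLT_of_mem (by constructor <;> norm_num)
  have hcont : ∀ q : MvPolynomial (Fin 2) ℂ, ∀ x : ℂ,
      Filter.Tendsto (fun t : ℝ => ‖ev q (x, (t : ℂ) * ζ)‖) (𝓝[<] (1 : ℝ))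
        (𝓝 ‖ev q (x, ζ)‖) := by
    intro q x
    have hc : Continuous fun t : ℝ => ‖ev q (x, (t : ℂ) * ζ)‖ :=
      ((continuous_ev q).comp (continuous_const.prodMk
        (Complex.continuous_ofReal.mul continuous_const))).norm
    have h2 : Filter.Tendsto (fun t : ℝ => ‖ev q (x, (t : ℂ) * ζ)‖) (𝓝[<] (1 : ℝ))
        (𝓝 ‖ev q (x, ((1 : ℝ) : ℂ) * ζ)‖) := (hc.tendsto 1).mono_left nhdsWithin_le_nhds
    simpa using h2
  refine le_of_tendsto_of_tendsto
    ((tendsto_const_nhds.mul (hcont p (((starRingEnd ℂ) y)⁻¹))) ) (hcont p y) ?_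
  filter_upwards [hmem] with t ht
  have htn : ‖(t : ℂ) * ζ‖ < 1 := by
    rw [norm_mul, hζ, mul_one, Complex.norm_real, Real.norm_eq_abs, abs_of_pos ht.1]
    exact ht.2
  exact refl_bound_fst hRIF htn hy hy0

/-- Boundary inequality `|p̃(z,ζ)| ≤ |p(z,ζ)|` for `|z| ≤ 1`, `|ζ| = 1`. -/
lemma boundary_bound {m n : ℕ} {p pt : MvPolynomial (Fin 2) ℂ} (hRIF : IsRIF2 m n p pt)
    {z ζ : ℂ} (hz : ‖z‖ ≤ 1) (hζ : ‖ζ‖ = 1) :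
    ‖ev pt (z, ζ)‖ ≤ ‖ev p (z, ζ)‖ := by
  have main : ∀ x : ℂ, ‖x‖ ≤ 1 → x ≠ 0 → ‖ev pt (x, ζ)‖ ≤ ‖ev p (x, ζ)‖ := by
    intro x hx hx0
    have h := hRIF.reflection (x, ζ) hx0 (unit_ne_zero hζ)
    simp only at h
    rw [conj_inv_unit hζ] at h
    have : ‖ev pt (x, ζ)‖ = ‖x‖ ^ m * ‖ev p (((starRingEnd ℂ) x)⁻¹, ζ)‖ := by
      rw [h, norm_mul, norm_mul, norm_pow, norm_pow, hζ, one_pow, mul_one, RCLike.norm_conj]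
    rw [this]
    exact refl_bound_fst_boundary hRIF hζ hx hx0
  rcases eq_or_ne z 0 with rfl | hz0
  · haveI : (𝓝[≠] (0 : ℂ)).NeBot := Module.punctured_nhds_neBot ℂ ℂ 0
    have hc : ∀ q : MvPolynomial (Fin 2) ℂ,
        Filter.Tendsto (fun x : ℂ => ‖ev q (x, ζ)‖) (𝓝[≠] (0 : ℂ)) (𝓝 ‖ev q (0, ζ)‖) := by
      intro q
      exact (((continuous_ev q).comp (continuous_id.prodMk continuous_const)).norm.tendsto
        0).mono_left nhdsWithin_le_nhds
    refine le_of_tendsto_of_tendsto (hc pt) (hc p) ?_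
    have hball : Metric.ball (0 : ℂ) 1 ∈ 𝓝[≠] (0 : ℂ) :=
      nhdsWithin_le_nhds (Metric.ball_mem_nhds 0 one_pos)
    filter_upwards [hball, self_mem_nhdsWithin] with x hx hx0
    exact main x (le_of_lt (by simpa using hx)) hx0
  · exact main z hz hz0

end LineMassAux
namespace LineMassAux

/-- The sequence `v * exp(i/(k+1))`: unimodular multiples of `v`, distinct, tending to `v`. -/
noncomputable def circSeq (v : ℂ) (k : ℕ) : ℂ :=
  v * Complex.exp (((1 / (k + 1) : ℝ) : ℂ) * Complex.I)

lemma circSeq_norm {v : ℂ} (hv : ‖v‖ = 1) (k : ℕ) : ‖circSeq v k‖ = 1 := by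
  rw [circSeq, norm_mul, hv, one_mul, Complex.norm_exp_ofReal_mul_I]

lemma circSeq_injective {v : ℂ} (hv : v ≠ 0) : Function.Injective (circSeq v) := by
  intro j k hjk
  rw [circSeq, circSeq] at hjk
  have h := mul_left_cancel₀ hv hjk
  rw [Complex.exp_eq_exp_iff_exists_int] at h
  obtain ⟨N, hN⟩ := h
  have hj : (0 : ℝ) < 1 / (j + 1) := by positivity
  have hk : (0 : ℝ) < 1 / (k + 1) := by positivity
  have hj1 : (1 : ℝ) / (j + 1) ≤ 1 := by
    rw [div_le_one (by positivity)]; exact le_add_of_nonneg_left (Nat.cast_nonneg j)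
  have hk1 : (1 : ℝ) / (k + 1) ≤ 1 := by
    rw [div_le_one (by positivity)]; exact le_add_of_nonneg_left (Nat.cast_nonneg k)
  have him : (1 / (j + 1) : ℝ) = (1 / (k + 1) : ℝ) + (N : ℝ) * (2 * Real.pi) := by
    have h3 : (((1 / (j + 1) : ℝ) : ℂ) - ((1 / (k + 1) : ℝ) : ℂ)
        - (N : ℂ) * (2 * (Real.pi : ℂ))) * Complex.I = 0 := by
      linear_combination hN
    rcases mul_eq_zero.mp h3 with h4 | h4
    · have h5 : (1 / (j + 1) : ℝ) - (1 / (k + 1) : ℝ) - (N : ℝ) * (2 * Real.pi) = 0 := by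
        exact_mod_cast h4
      linarith
    · exact absurd h4 Complex.I_ne_zero
  have hN0 : N = 0 := by
    rcases lt_trichotomy N 0 with h | h | h
    · have hle : N ≤ -1 := by omega
      have hle' : (N : ℝ) ≤ -1 := by exact_mod_cast hle
      nlinarith [Real.pi_gt_three]
    · exact h
    · have hge : 1 ≤ N := by omega
      have hge' : (1 : ℝ) ≤ (N : ℝ) := by exact_mod_cast hge
      nlinarith [Real.pi_gt_three]
  rw [hN0] at him
  simp only [Int.cast_zero, zero_mul, add_zero] at him
  have hj2 : ((j : ℝ) + 1) ≠ 0 := by positivity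
  have hk2 : ((k : ℝ) + 1) ≠ 0 := by positivity
  field_simp at him
  exact_mod_cast (by linarith : (j : ℝ) = k)

lemma circSeq_tendsto (v : ℂ) : Filter.Tendsto (circSeq v) Filter.atTop (𝓝 v) := by
  have hf : Continuous fun t : ℝ => v * Complex.exp ((t : ℂ) * Complex.I) :=
    continuous_const.mul
      (Complex.continuous_exp.comp (Complex.continuous_ofReal.mul continuous_const))
  have h1 : Filter.Tendsto (fun k : ℕ => (1 / (k + 1) : ℝ)) Filter.atTop (𝓝 0) :=
    tendsto_one_div_add_atTop_nhds_zero_nat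
  have h2 := (hf.tendsto 0).comp h1
  simp only [Function.comp, Complex.ofReal_zero, zero_mul, Complex.exp_zero, mul_one] at h2
  exact h2

/-- Innerness: `‖p̃‖ ≤ ‖p‖` on `𝔻 × closed 𝔻`. -/
lemma inner_bound {m n : ℕ} {p pt : MvPolynomial (Fin 2) ℂ} (hRIF : IsRIF2 m n p pt)
    {z w : ℂ} (hz : ‖z‖ < 1) (hw : ‖w‖ ≤ 1) :
    ‖ev pt (z, w)‖ ≤ ‖ev p (z, w)‖ := by
  classical
  set P := polySnd p z with hP
  set PT := polySnd pt z with hPT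
  have hPball : ∀ v : ℂ, ‖v‖ < 1 → P.eval v ≠ 0 := by
    intro v hv
    rw [hP, polySnd_eval]
    exact hRIF.stable (z, v) ⟨hz, hv⟩
  have hP0 : P ≠ 0 := by
    intro h
    exact hPball 0 (by simp) (by rw [h]; simp)
  have hbnd : ∀ v : ℂ, ‖v‖ = 1 → ‖PT.eval v‖ ≤ ‖P.eval v‖ := by
    intro v hv
    rw [hP, hPT, polySnd_eval, polySnd_eval]
    exact boundary_bound hRIF (le_of_lt hz) hv
  rcases eq_or_ne PT 0 with hPT0 | hPT0
  · rw [← polySnd_eval pt z w, ← hPT, hPT0]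
    simp [norm_nonneg]
  -- divide by the gcd
  set g := GCDMonoid.gcd P PT with hg
  have hg0 : g ≠ 0 := gcd_ne_zero_of_left hP0
  set A := PT / g with hA
  set B := P / g with hB
  have hPfac : g * B = P := EuclideanDomain.mul_div_cancel' hg0 (gcd_dvd_left P PT)
  have hPTfac : g * A = PT := EuclideanDomain.mul_div_cancel' hg0 (gcd_dvd_right P PT)
  have hcop : IsCoprime B A := isCoprime_div_gcd_div_gcd hPT0
  have hBball : ∀ v : ℂ, ‖v‖ < 1 → B.eval v ≠ 0 := by
    intro v hv hBv
    exact hPball v hv (by rw [← hPfac]; simp [hBv])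
  -- circle inequality for A, B
  have hAB : ∀ v : ℂ, ‖v‖ = 1 → ‖A.eval v‖ ≤ ‖B.eval v‖ := by
    intro v hv
    have hv0 : v ≠ 0 := unit_ne_zero hv
    have hfin : Set.Finite {x : ℂ | g.IsRoot x} := Polynomial.finite_setOf_isRoot hg0
    have hpre : Set.Finite {k : ℕ | g.IsRoot (circSeq v k)} :=
      Set.Finite.preimage (Set.injOn_of_injective (circSeq_injective hv0)) hfin
    have hev : ∀ᶠ k : ℕ in Filter.atTop, ¬ g.IsRoot (circSeq v k) := by
      rw [← Nat.cofinite_eq_atTop]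
      exact hpre.eventually_cofinite_notMem
    have hcA : Filter.Tendsto (fun k => ‖A.eval (circSeq v k)‖) Filter.atTop (𝓝 ‖A.eval v‖) :=
      ((A.continuous.norm).tendsto v).comp (circSeq_tendsto v)
    have hcB : Filter.Tendsto (fun k => ‖B.eval (circSeq v k)‖) Filter.atTop (𝓝 ‖B.eval v‖) :=
      ((B.continuous.norm).tendsto v).comp (circSeq_tendsto v)
    refine le_of_tendsto_of_tendsto hcA hcB ?_
    filter_upwards [hev] with k hk
    have hgk : g.eval (circSeq v k) ≠ 0 := hk
    have h1 := hbnd (circSeq v k) (circSeq_norm hv k)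
    rw [← hPfac, ← hPTfac] at h1
    simp only [Polynomial.eval_mul, norm_mul] at h1
    have hgpos : 0 < ‖g.eval (circSeq v k)‖ := norm_pos_iff.mpr hgk
    exact le_of_mul_le_mul_left h1 hgpos
  -- B has no circle zeros
  have hBcirc : ∀ v : ℂ, ‖v‖ = 1 → B.eval v ≠ 0 := by
    intro v hv hBv
    have hAv : A.eval v = 0 := by
      have h' := hAB v hv
      rw [hBv, norm_zero] at h'
      exact norm_le_zero_iff.mp h'
    obtain ⟨x, y, hxy⟩ := hcop
    have := congrArg (Polynomial.eval v) hxy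
    simp [hBv, hAv] at this
  have hBcl : ∀ v : ℂ, ‖v‖ ≤ 1 → B.eval v ≠ 0 := by
    intro v hv
    rcases lt_or_eq_of_le hv with h | h
    · exact hBball v h
    · exact hBcirc v h
  -- maximum modulus
  have hmax : ‖A.eval w / B.eval w‖ ≤ 1 := by
    have hUb : Bornology.IsBounded (Metric.ball (0 : ℂ) 1) := Metric.isBounded_ball
    have hdiff : DiffContOnCl ℂ (fun x => A.eval x / B.eval x) (Metric.ball (0 : ℂ) 1) := by
      constructor
      · exact DifferentiableOn.div
          (Polynomial.differentiable A).differentiableOn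
          (Polynomial.differentiable B).differentiableOn
          (fun x hx => hBcl x (le_of_lt (by simpa using hx)))
      · rw [closure_ball (0 : ℂ) one_ne_zero]
        exact ContinuousOn.div
          (Polynomial.continuous A).continuousOn
          (Polynomial.continuous B).continuousOn
          (fun x hx => hBcl x (by simpa using hx))
    refine Complex.norm_le_of_forall_mem_frontier_norm_le hUb hdiff ?_ ?_
    · intro x hx
      rw [frontier_ball (0 : ℂ) one_ne_zero] at hx
      have hx1 : ‖x‖ = 1 := by simpa using hx
      rw [norm_div]
      rw [div_le_one (norm_pos_iff.mpr (hBcirc x hx1))]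
      exact hAB x hx1
    · rw [closure_ball (0 : ℂ) one_ne_zero]
      simpa using hw
  have hBw : B.eval w ≠ 0 := hBcl w hw
  have hABw : ‖A.eval w‖ ≤ ‖B.eval w‖ := by
    rw [norm_div, div_le_one (norm_pos_iff.mpr hBw)] at hmax
    exact hmax
  have final : ‖PT.eval w‖ ≤ ‖P.eval w‖ := by
    rw [← hPfac, ← hPTfac]
    simp only [Polynomial.eval_mul, norm_mul]
    exact mul_le_mul_of_nonneg_left hABw (norm_nonneg _)
  rw [← polySnd_eval pt z w, ← polySnd_eval p z w]
  exact final

end LineMassAux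
namespace LineMassAux

lemma ev_sub (q r : MvPolynomial (Fin 2) ℂ) (z : ℂ × ℂ) :
    ev (q - r) z = ev q z - ev r z := by simp [ev]

lemma circle_infinite : {y : ℂ | ‖y‖ = 1}.Infinite :=
  Set.infinite_of_injective_forall_mem (circSeq_injective one_ne_zero)
    (fun k => circSeq_norm norm_one k)

lemma ball_infinite : {y : ℂ | ‖y‖ < 1}.Infinite := by
  have hinj : Function.Injective fun k : ℕ => (((k : ℂ) + 2))⁻¹ := by
    intro j k h
    have h2 : ((j : ℂ) + 2) = ((k : ℂ) + 2) := by
      have hj : ((j : ℂ) + 2) ≠ 0 := by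
        intro h0
        have := congrArg Complex.re h0
        simp at this
        nlinarith [this, (by positivity : (0:ℝ) ≤ (j:ℝ))]
      exact inv_inj.mp h
    have : (j : ℂ) = (k : ℂ) := by linear_combination h2
    exact_mod_cast this
  refine Set.infinite_of_injective_forall_mem hinj (fun k => ?_)
  simp only [Set.mem_setOf_eq, norm_inv]
  have : ‖(k : ℂ) + 2‖ = (k : ℝ) + 2 := by
    have : ((k : ℂ) + 2) = (((k + 2 : ℕ) : ℂ)) := by push_cast; ring
    rw [this, Complex.norm_natCast]
    push_cast; ring
  rw [this]
  rw [inv_lt_one_iff₀]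
  right
  nlinarith [(by positivity : (0:ℝ) ≤ (k:ℝ))]

/-- On the line `z₁ = τ`, `p̃ = α p` identically. -/
lemma line_identity {m n : ℕ} {p pt : MvPolynomial (Fin 2) ℂ} (hRIF : IsRIF2 m n p pt)
    {α τ : ℂ} (hτ : ‖τ‖ = 1) (hline : vLine τ ⊆ levelSet2 p pt α) :
    ∀ y : ℂ, ev pt (τ, y) = α * ev p (τ, y) := by
  set S := {ζ : ℂ × ℂ | ζ ∈ torus2 ∧
    Filter.Tendsto (fun r : ℝ => rif p pt ((r : ℂ) * ζ.1, (r : ℂ) * ζ.2))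
      (𝓝[<] (1 : ℝ)) (𝓝 α)} with hS
  have hScase : ∀ ζ ∈ S, ev pt ζ - α * ev p ζ = 0 := by
    rintro ⟨ζ₁, ζ₂⟩ ⟨⟨h1, h2⟩, htend⟩
    rcases eq_or_ne (ev p (ζ₁, ζ₂)) 0 with hp0 | hp0
    · have := torus_norm_eq hRIF.reflection h1 h2
      rw [hp0, norm_zero, norm_eq_zero] at this
      rw [this, hp0, mul_zero, sub_zero]
    · have hmap : Filter.Tendsto (fun r : ℝ => (((r : ℂ) * ζ₁, (r : ℂ) * ζ₂) : ℂ × ℂ))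
          (𝓝[<] (1 : ℝ)) (𝓝 (ζ₁, ζ₂)) := by
        have hc : Continuous fun r : ℝ => (((r : ℂ) * ζ₁, (r : ℂ) * ζ₂) : ℂ × ℂ) :=
          (Complex.continuous_ofReal.mul continuous_const).prodMk
            (Complex.continuous_ofReal.mul continuous_const)
        have := (hc.tendsto 1).mono_left (nhdsWithin_le_nhds (s := Set.Iio (1 : ℝ)))
        simpa using this
      have hcont : ContinuousAt (rif p pt) (ζ₁, ζ₂) :=
        ContinuousAt.div ((continuous_ev pt).continuousAt) ((continuous_ev p).continuousAt) hp0
      have htend2 : Filter.Tendsto (fun r : ℝ => rif p pt ((r : ℂ) * ζ₁, (r : ℂ) * ζ₂))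
          (𝓝[<] (1 : ℝ)) (𝓝 (rif p pt (ζ₁, ζ₂))) := hcont.tendsto.comp hmap
      have huniq : rif p pt (ζ₁, ζ₂) = α := tendsto_nhds_unique htend2 htend
      rw [rif] at huniq
      rw [div_eq_iff hp0] at huniq
      rw [huniq]
      ring
  have hclosed : IsClosed {ζ : ℂ × ℂ | ev pt ζ - α * ev p ζ = 0} :=
    isClosed_eq ((continuous_ev pt).sub (continuous_const.mul (continuous_ev p)))
      continuous_const
  have hclos : levelSet2 p pt α ⊆ {ζ : ℂ × ℂ | ev pt ζ - α * ev p ζ = 0} := by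
    rw [levelSet2]
    exact closure_minimal hScase hclosed
  have hcirc : ∀ y : ℂ, ‖y‖ = 1 → ev pt (τ, y) - α * ev p (τ, y) = 0 := by
    intro y hy
    exact hclos (hline (show ((τ, y) : ℂ × ℂ) ∈ vLine τ from ⟨rfl, hy⟩))
  -- polynomial identity
  have hpoly : polySnd pt τ = Polynomial.C α * polySnd p τ := by
    apply Polynomial.eq_of_infinite_eval_eq
    apply Set.Infinite.mono _ circle_infinite
    intro y hy
    simp only [Set.mem_setOf_eq] at hy ⊢
    rw [polySnd_eval, Polynomial.eval_mul, Polynomial.eval_C, polySnd_eval]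
    exact sub_eq_zero.mp (hcirc y hy)
  intro y
  have := congrArg (Polynomial.eval y) hpoly
  rwa [polySnd_eval, Polynomial.eval_mul, Polynomial.eval_C, polySnd_eval] at this

/-- `p` does not vanish on the open part of the line. -/
lemma p_ne_on_line {p pt : MvPolynomial (Fin 2) ℂ} {τ dc : ℂ} (hdc0 : dc ≠ 0)
    (hdc : ∀ z₂ : ℂ, ‖z₂‖ < 1 → dphi1 p pt (τ, z₂) = dc) :
    ∀ y : ℂ, ‖y‖ < 1 → ev p (τ, y) ≠ 0 := by
  intro y hy h0
  have := hdc y hy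
  rw [dphi1] at this
  rw [h0] at this
  simp at this
  exact hdc0 this.symm

/-- The numerator identity `N(τ,·) = dc · p(τ,·)²` as an identity of functions. -/
lemma numerator_identity {p pt : MvPolynomial (Fin 2) ℂ} {τ dc : ℂ} (hdc0 : dc ≠ 0)
    (hdc : ∀ z₂ : ℂ, ‖z₂‖ < 1 → dphi1 p pt (τ, z₂) = dc) :
    ∀ y : ℂ,
      ev (MvPolynomial.pderiv 0 pt) (τ, y) * ev p (τ, y)
        - ev pt (τ, y) * ev (MvPolynomial.pderiv 0 p) (τ, y)
      = dc * (ev p (τ, y)) ^ 2 := by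
  set N := MvPolynomial.pderiv 0 pt * p - pt * MvPolynomial.pderiv 0 p with hN
  have hpoly : polySnd N τ = Polynomial.C dc * (polySnd p τ) ^ 2 := by
    apply Polynomial.eq_of_infinite_eval_eq
    apply Set.Infinite.mono _ ball_infinite
    intro y hy
    simp only [Set.mem_setOf_eq] at hy ⊢
    have hp0 := p_ne_on_line hdc0 hdc y hy
    have := hdc y hy
    rw [dphi1] at this
    rw [div_eq_iff (pow_ne_zero 2 hp0)] at this
    rw [polySnd_eval, Polynomial.eval_mul, Polynomial.eval_C, Polynomial.eval_pow, polySnd_eval]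
    rw [hN, ev_sub, ev_mul, ev_mul]
    rw [this]
  intro y
  have := congrArg (Polynomial.eval y) hpoly
  rw [polySnd_eval, Polynomial.eval_mul, Polynomial.eval_C, Polynomial.eval_pow,
    polySnd_eval, hN, ev_sub, ev_mul, ev_mul] at this
  exact this

end LineMassAux
namespace LineMassAux

lemma conj_eq_inv_unit {ζ : ℂ} (h : ‖ζ‖ = 1) : (starRingEnd ℂ) ζ = ζ⁻¹ := by
  have h1 : ζ * (starRingEnd ℂ) ζ = 1 := by
    rw [Complex.mul_conj]
    norm_cast
    rw [← Complex.sq_norm, h, one_pow]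
  exact eq_inv_of_mul_eq_one_left (by rw [mul_comm]; exact h1)

/-- Realness of `conj α * τ * dc`. -/
lemma c_real {m n : ℕ} {p pt : MvPolynomial (Fin 2) ℂ} (hRIF : IsRIF2 m n p pt)
    {α τ dc : ℂ} (hα : ‖α‖ = 1) (hτ : ‖τ‖ = 1)
    (hlineid : ∀ y : ℂ, ev pt (τ, y) = α * ev p (τ, y))
    (hnum : ∀ y : ℂ,
      ev (MvPolynomial.pderiv 0 pt) (τ, y) * ev p (τ, y)
        - ev pt (τ, y) * ev (MvPolynomial.pderiv 0 p) (τ, y)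
      = dc * (ev p (τ, y)) ^ 2)
    (hp0 : ∃ y : ℂ, ‖y‖ < 1 ∧ ev p (τ, y) ≠ 0) :
    (starRingEnd ℂ) ((starRingEnd ℂ) α * τ * dc) = (starRingEnd ℂ) α * τ * dc := by
  obtain ⟨y₀, hy₀, hpy₀⟩ := hp0
  have hτ0 : τ ≠ 0 := unit_ne_zero hτ
  have hα0 : α ≠ 0 := unit_ne_zero hα
  -- choose a good circle point ζ
  have hQp0 : polySnd p τ ≠ 0 := by
    intro h
    apply hpy₀
    rw [← polySnd_eval, h, Polynomial.eval_zero]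
  obtain ⟨ζ, hζc, hζr⟩ := (circle_infinite.diff (Polynomial.finite_setOf_isRoot hQp0)).nonempty
  have hζ : ‖ζ‖ = 1 := hζc
  have hζ0 : ζ ≠ 0 := unit_ne_zero hζ
  have hP : ev p (τ, ζ) ≠ 0 := by
    intro h
    exact hζr (by rw [Set.mem_setOf_eq, Polynomial.IsRoot.def, polySnd_eval]; exact h)
  set P := ev p (τ, ζ) with hPdef
  set P' := ev (MvPolynomial.pderiv 0 p) (τ, ζ) with hP'def
  set PT' := ev (MvPolynomial.pderiv 0 pt) (τ, ζ) with hPT'def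
  have hcP : (starRingEnd ℂ) P ≠ 0 := by simpa using hP
  -- E1: PT' = dc * P + α * P'
  have hE1 : PT' = dc * P + α * P' := by
    have h1 := hnum ζ
    rw [hlineid ζ] at h1
    have h2 : (PT' - dc * P - α * P') * P = 0 := by linear_combination h1
    rcases mul_eq_zero.mp h2 with h3 | h3
    · linear_combination h3
    · exact absurd h3 hP
  -- E3: α * P = τ^m * ζ^n * conj P
  have hrefl := hRIF.reflection (τ, ζ) hτ0 hζ0
  simp only at hrefl
  rw [conj_inv_unit hτ, conj_inv_unit hζ] at hrefl
  have hE3 : α * P = τ ^ m * ζ ^ n * (starRingEnd ℂ) P := by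
    rw [← hlineid ζ]
    exact hrefl
  -- E2 via differentiation of the reflection identity
  have hg := hasDerivAt_ev_conj p ζ (τ⁻¹)
  have hct : (starRingEnd ℂ) (τ⁻¹) = τ := by
    rw [map_inv₀, conj_inv_unit hτ]
  rw [hct] at hg
  have hinv : HasDerivAt (fun z : ℂ => z⁻¹) (-(τ ^ 2)⁻¹) τ := hasDerivAt_inv hτ0
  have hginv : HasDerivAt (fun z : ℂ => (starRingEnd ℂ) (ev p ((starRingEnd ℂ) z⁻¹, ζ)))
      ((starRingEnd ℂ) (ev (MvPolynomial.pderiv 0 p) (τ, ζ)) * (-(τ ^ 2)⁻¹)) τ := by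
    have h := hg.comp τ hinv
    simp only [Function.comp_def] at h
    exact h
  have hpow : HasDerivAt (fun z : ℂ => z ^ m * ζ ^ n) ((m : ℂ) * τ ^ (m - 1) * ζ ^ n) τ :=
    (hasDerivAt_pow m τ).mul_const (ζ ^ n)
  have hF2 : HasDerivAt (fun z : ℂ => z ^ m * ζ ^ n
        * (starRingEnd ℂ) (ev p ((starRingEnd ℂ) z⁻¹, ζ)))
      ((m : ℂ) * τ ^ (m - 1) * ζ ^ n * (starRingEnd ℂ) (ev p ((starRingEnd ℂ) τ⁻¹, ζ))
        + τ ^ m * ζ ^ n * ((starRingEnd ℂ) P' * (-(τ ^ 2)⁻¹))) τ := by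
    exact hpow.mul hginv
  rw [hct] at hF2
  have hF1 : HasDerivAt (fun z : ℂ => ev pt (z, ζ)) PT' τ := hasDerivAt_ev pt ζ τ
  have hEq : (fun z : ℂ => ev pt (z, ζ))
      =ᶠ[𝓝 τ] fun z : ℂ => z ^ m * ζ ^ n * (starRingEnd ℂ) (ev p ((starRingEnd ℂ) z⁻¹, ζ)) := by
    have hopen : {z : ℂ | z ≠ 0} ∈ 𝓝 τ := isOpen_compl_singleton.mem_nhds hτ0
    filter_upwards [hopen] with z hz
    have h := hRIF.reflection (z, ζ) hz hζ0
    simp only at h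
    rw [conj_inv_unit hζ] at h
    rw [h, map_inv₀]
  have hF1' : HasDerivAt (fun z : ℂ => ev pt (z, ζ))
      ((m : ℂ) * τ ^ (m - 1) * ζ ^ n * (starRingEnd ℂ) P
        + τ ^ m * ζ ^ n * ((starRingEnd ℂ) P' * (-(τ ^ 2)⁻¹))) τ :=
    HasDerivAt.congr_of_eventuallyEq hF2 hEq
  have hE2 : PT' = (m : ℂ) * τ ^ (m - 1) * ζ ^ n * (starRingEnd ℂ) P
      + τ ^ m * ζ ^ n * ((starRingEnd ℂ) P' * (-(τ ^ 2)⁻¹)) :=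
    hF1.unique hF1'
  -- replace exponents: τ^m = τ^(m-1) * τ
  have hm := hRIF.hm
  have hm1 : τ ^ m = τ ^ (m - 1) * τ := by
    conv_lhs => rw [show m = (m - 1) + 1 by omega]
    rw [pow_succ]
  set T := τ ^ (m - 1) with hT
  set Z := ζ ^ n with hZ
  -- KEY equation and its conjugate
  have hkey : dc * (τ ^ 2 * P * (starRingEnd ℂ) P)
      = α * (P * ((m : ℂ) * τ * (starRingEnd ℂ) P - (starRingEnd ℂ) P')
          - τ ^ 2 * P' * (starRingEnd ℂ) P) := by
    have hE2' : PT' * τ ^ 2 = (m : ℂ) * T * Z * (starRingEnd ℂ) P * τ ^ 2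
        - T * τ * Z * (starRingEnd ℂ) P' := by
      rw [hE2, hm1]
      have hττ : τ ^ 2 * (τ ^ 2)⁻¹ = 1 := mul_inv_cancel₀ (pow_ne_zero 2 hτ0)
      field_simp
      ring
    -- substitute using hE3 : α * P = T * τ * Z * conj P
    have hE3' : α * P = T * τ * Z * (starRingEnd ℂ) P := by rw [← hm1]; exact hE3
    -- combine
    have h1 : (dc * P + α * P') * τ ^ 2 * (starRingEnd ℂ) P
        = ((m : ℂ) * T * Z * (starRingEnd ℂ) P * τ ^ 2
            - T * τ * Z * (starRingEnd ℂ) P') * (starRingEnd ℂ) P := by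
      rw [← hE1]
      linear_combination (starRingEnd ℂ) P * hE2'
    have h2 : ((m : ℂ) * T * Z * (starRingEnd ℂ) P * τ ^ 2
          - T * τ * Z * (starRingEnd ℂ) P') * (starRingEnd ℂ) P
        = (m : ℂ) * τ * (α * P) * (starRingEnd ℂ) P - (starRingEnd ℂ) P' * (α * P) := by
      linear_combination ((starRingEnd ℂ) P' - (m : ℂ) * τ * (starRingEnd ℂ) P) * hE3'
    linear_combination h1 + h2
  -- conjugate of hkey (keeping conj τ, conj α as atoms)
  have hckey := congrArg (starRingEnd ℂ) hkey
  simp only [map_mul, map_add, map_sub, map_pow, map_natCast, Complex.conj_conj] at hckey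
  have hτu : τ * (starRingEnd ℂ) τ = 1 := by
    rw [Complex.mul_conj]
    norm_cast
    rw [← Complex.sq_norm, hτ, one_pow]
  have hcτ0 : (starRingEnd ℂ) τ ≠ 0 := by simpa using hτ0
  have hM : τ ^ 2 * (starRingEnd ℂ) τ ^ 2 * P * (starRingEnd ℂ) P ≠ 0 :=
    mul_ne_zero (mul_ne_zero (mul_ne_zero (pow_ne_zero 2 hτ0) (pow_ne_zero 2 hcτ0)) hP) hcP
  rw [map_mul, map_mul, Complex.conj_conj]
  -- goal : α * conj τ * conj dc = conj α * τ * dc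
  have H : (α * (starRingEnd ℂ) τ * (starRingEnd ℂ) dc)
        * (τ ^ 2 * (starRingEnd ℂ) τ ^ 2 * P * (starRingEnd ℂ) P)
      = ((starRingEnd ℂ) α * τ * dc)
        * (τ ^ 2 * (starRingEnd ℂ) τ ^ 2 * P * (starRingEnd ℂ) P) := by
    linear_combination (α * τ ^ 2 * (starRingEnd ℂ) τ) * hckey
      - ((starRingEnd ℂ) α * τ * (starRingEnd ℂ) τ ^ 2) * hkey
      + (α * (starRingEnd ℂ) α * τ * (starRingEnd ℂ) τ
          * (τ * (starRingEnd ℂ) P * P' - (starRingEnd ℂ) τ * P * (starRingEnd ℂ) P')) * hτu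
  exact mul_right_cancel₀ hM H

end LineMassAux
namespace LineMassAux

/-- `1 - ‖w‖² = 2 Re(conj v (v - w)) - ‖v - w‖²` when `‖v‖ = 1`. -/
lemma key_id (v w : ℂ) (hv : ‖v‖ = 1) :
    1 - ‖w‖ ^ 2 = 2 * ((starRingEnd ℂ) v * (v - w)).re - ‖v - w‖ ^ 2 := by
  have hv2 : v.re ^ 2 + v.im ^ 2 = 1 := by
    have h1 : ‖v‖ ^ 2 = Complex.normSq v := by
      exact Complex.sq_norm v
    rw [hv, one_pow, Complex.normSq_apply] at h1
    nlinarith [h1]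
  have h1 : ‖w‖ ^ 2 = w.re ^ 2 + w.im ^ 2 := by
    rw [Complex.sq_norm, Complex.normSq_apply]; ring
  have h2 : ‖v - w‖ ^ 2 = (v.re - w.re) ^ 2 + (v.im - w.im) ^ 2 := by
    rw [Complex.sq_norm, Complex.normSq_apply]
    simp only [Complex.sub_re, Complex.sub_im]
    ring
  rw [h1, h2]
  simp only [Complex.mul_re, Complex.conj_re, Complex.conj_im, Complex.sub_re, Complex.sub_im]
  linear_combination (-1 : ℝ) * hv2

lemma quot_alg (R U t : ℝ) (ht : 0 < t) (hU : 0 < U) :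
    (2 * (R / t) - t * (U ^ 2 / t ^ 2)) / (U ^ 2 / t ^ 2) = t * ((2 * R - U ^ 2) / U ^ 2) := by
  field_simp

end LineMassAux


/-- Let `φ = p̃/p` be a bidegree `(m,n)` RIF on `𝔻²`, let `α ∈ 𝕋`,
and suppose the vertical line `{ζ ∈ 𝕋² : ζ₁ = τ}` is contained in `C_α(φ)`, so that
`d = ∂φ/∂z₁(τ, z₂)` is a nonzero constant independent of `z₂ ∈ 𝔻`. Then for every fixed
`z₂ ∈ 𝔻`, `(1−r)·(1−|φ(rτ, z₂)|²)/|α − φ(rτ, z₂)|² → 2/|d|` as `r → 1⁻`. -/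
theorem line_mass_limit
    (m n : ℕ) (p pt : MvPolynomial (Fin 2) ℂ) (hRIF : IsRIF2 m n p pt)
    (α : ℂ) (hα : ‖α‖ = 1) (τ : ℂ) (hτ : ‖τ‖ = 1)
    (hline : vLine τ ⊆ levelSet2 p pt α)
    (dc : ℂ) (hdc0 : dc ≠ 0)
    (hdc : ∀ z₂ : ℂ, ‖z₂‖ < 1 → dphi1 p pt (τ, z₂) = dc) :
    ∀ z₂ : ℂ, ‖z₂‖ < 1 →
      Tendsto
        (fun r : ℝ =>
          (1 - r) *
            ((1 - ‖rif p pt ((r : ℂ) * τ, z₂)‖ ^ 2) /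
              ‖α - rif p pt ((r : ℂ) * τ, z₂)‖ ^ 2))
        (𝓝[<] (1 : ℝ)) (𝓝 (2 / ‖dc‖)) := by
  intro b hb
  classical
  have hτ0 : τ ≠ 0 := LineMassAux.unit_ne_zero hτ
  have hα0 : α ≠ 0 := LineMassAux.unit_ne_zero hα
  have hp0 : ev p (τ, b) ≠ 0 := LineMassAux.p_ne_on_line hdc0 hdc b hb
  have hlineid := LineMassAux.line_identity hRIF hτ hline
  have hnum := LineMassAux.numerator_identity hdc0 hdc
  set cα := (starRingEnd ℂ) α with hcαdef
  set cc := cα * τ * dc with hccdef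
  have hcreal : (starRingEnd ℂ) cc = cc :=
    LineMassAux.c_real hRIF hα hτ hlineid hnum ⟨b, hb, hp0⟩
  have hccim : cc.im = 0 := Complex.conj_eq_iff_im.mp hcreal
  have hccnorm : ‖cc‖ = ‖dc‖ := by
    rw [hccdef, norm_mul, norm_mul, hcαdef, RCLike.norm_conj, hα, hτ, one_mul, one_mul]
  -- the one-variable function and its derivative at τ
  set f : ℂ → ℂ := fun z => rif p pt (z, b) with hfdef
  have hfτ : f τ = α := by
    rw [hfdef]
    show ev pt (τ, b) / ev p (τ, b) = α
    rw [hlineid b, mul_div_assoc, div_self hp0, mul_one]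
  have hf : HasDerivAt f dc τ := by
    have h := (LineMassAux.hasDerivAt_ev pt b τ).div (LineMassAux.hasDerivAt_ev p b τ) hp0
    have hval := hdc b hb
    rw [dphi1] at hval
    rw [hfdef]
    show HasDerivAt (fun z => ev pt (z, b) / ev p (z, b)) dc τ
    rw [← hval]
    exact h
  -- slope limit along the radius
  have hτmap : Tendsto (fun r : ℝ => (r : ℂ) * τ) (𝓝[<] (1 : ℝ)) (𝓝[≠] τ) := by
    rw [tendsto_nhdsWithin_iff]
    constructor
    · have hc : Continuous fun r : ℝ => (r : ℂ) * τ :=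
        Complex.continuous_ofReal.mul continuous_const
      have := (hc.tendsto 1).mono_left (nhdsWithin_le_nhds (s := Set.Iio (1 : ℝ)))
      simpa using this
    · filter_upwards [self_mem_nhdsWithin] with r hr
      intro hmem
      have h1 : ((r : ℂ) - 1) * τ = 0 := by
        rw [Set.mem_singleton_iff] at hmem
        linear_combination hmem
      rcases mul_eq_zero.mp h1 with h2 | h2
      · have : (r : ℂ) = 1 := by linear_combination h2
        have : r = (1 : ℝ) := by exact_mod_cast this
        exact absurd this (ne_of_lt hr)
      · exact hτ0 h2
  have hslope : Tendsto (slope f τ) (𝓝[≠] τ) (𝓝 dc) := hasDerivAt_iff_tendsto_slope.mp hf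
  have hsl : Tendsto (fun r : ℝ => slope f τ ((r : ℂ) * τ)) (𝓝[<] (1 : ℝ)) (𝓝 dc) :=
    hslope.comp hτmap
  -- the normalized difference quotient
  set F : ℝ → ℂ := fun r => rif p pt ((r : ℂ) * τ, b) with hFdef
  set quot : ℝ → ℂ := fun r => (α - F r) / (1 - (r : ℂ)) with hquotdef
  have hq : Tendsto quot (𝓝[<] (1 : ℝ)) (𝓝 (dc * τ)) := by
    apply Tendsto.congr' _ (hsl.mul_const τ)
    filter_upwards [self_mem_nhdsWithin] with r hr
    have hr1 : (r : ℂ) ≠ 1 := by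
      intro h
      exact absurd (by exact_mod_cast h : r = (1 : ℝ)) (ne_of_lt hr)
    have hne1 : (1 : ℂ) - (r : ℂ) ≠ 0 := by
      intro h
      exact hr1 (by linear_combination -h)
    have hne2 : (r : ℂ) * τ - τ ≠ 0 := by
      intro h
      have h1 : ((r : ℂ) - 1) * τ = 0 := by linear_combination h
      rcases mul_eq_zero.mp h1 with h2 | h2
      · exact hr1 (by linear_combination h2)
      · exact hτ0 h2
    rw [slope_def_field, hfτ, hquotdef]
    show (f ((r : ℂ) * τ) - α) / ((r : ℂ) * τ - τ) * τ = (α - F r) / (1 - (r : ℂ))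
    have hFf : F r = f ((r : ℂ) * τ) := rfl
    rw [hFf]
    field_simp
    ring
  have hqc : Tendsto (fun r => cα * quot r) (𝓝[<] (1 : ℝ)) (𝓝 cc) := by
    have h := (tendsto_const_nhds (x := cα)).mul hq
    have : cα * (dc * τ) = cc := by rw [hccdef]; ring
    rwa [this] at h
  have hM : Tendsto (fun r => (cα * quot r).re) (𝓝[<] (1 : ℝ)) (𝓝 cc.re) :=
    (Complex.continuous_re.tendsto cc).comp hqc
  have hLn : Tendsto (fun r => ‖quot r‖) (𝓝[<] (1 : ℝ)) (𝓝 ‖dc‖) := by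
    have h := (continuous_norm.tendsto (dc * τ)).comp hq
    have : ‖dc * τ‖ = ‖dc‖ := by rw [norm_mul, hτ, mul_one]
    rwa [this] at h
  have hL : Tendsto (fun r => ‖quot r‖ ^ 2) (𝓝[<] (1 : ℝ)) (𝓝 (‖dc‖ ^ 2)) := hLn.pow 2
  have hdcpos : (0 : ℝ) < ‖dc‖ := norm_pos_iff.mpr hdc0
  -- eventually facts
  have hIoo : Set.Ioo (0 : ℝ) 1 ∈ 𝓝[<] (1 : ℝ) :=
    Ioo_mem_nhdsLT_of_mem (by constructor <;> norm_num)
  have hune : ∀ᶠ r in 𝓝[<] (1 : ℝ), α - F r ≠ 0 := by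
    have h := hLn.eventually (eventually_gt_nhds (half_lt_self hdcpos))
    filter_upwards [h, self_mem_nhdsWithin] with r hr hr1
    intro h0
    rw [hquotdef] at hr
    simp only [h0, norm_div, norm_zero, zero_div] at hr
    linarith [half_pos hdcpos, hr]
  have hFle : ∀ᶠ r in 𝓝[<] (1 : ℝ), ‖F r‖ ≤ 1 := by
    filter_upwards [hIoo] with r hr
    have hrτ : ‖(r : ℂ) * τ‖ < 1 := by
      rw [norm_mul, hτ, mul_one, Complex.norm_real, Real.norm_eq_abs, abs_of_pos hr.1]
      exact hr.2
    have hple := LineMassAux.inner_bound hRIF hrτ (le_of_lt hb)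
    have hpne : ev p ((r : ℂ) * τ, b) ≠ 0 := hRIF.stable _ ⟨hrτ, hb⟩
    rw [hFdef]
    show ‖ev pt ((r : ℂ) * τ, b) / ev p ((r : ℂ) * τ, b)‖ ≤ 1
    rw [norm_div, div_le_one (norm_pos_iff.mpr hpne)]
    exact hple
  -- conversion : real scalar denominators
  have hconv : ∀ r : ℝ, r < 1 → (cα * quot r).re = (cα * (α - F r)).re / (1 - r) := by
    intro r hr
    have h1 : (1 : ℂ) - (r : ℂ) = ((1 - r : ℝ) : ℂ) := by push_cast; ring
    rw [hquotdef]
    show (cα * ((α - F r) / (1 - (r : ℂ)))).re = (cα * (α - F r)).re / (1 - r)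
    rw [h1, mul_div_assoc']
    exact Complex.div_ofReal_re _ _
  have hconv2 : ∀ r : ℝ, 0 < r → r < 1 → ‖quot r‖ ^ 2 = ‖α - F r‖ ^ 2 / (1 - r) ^ 2 := by
    intro r hr0 hr
    have h1 : (1 : ℂ) - (r : ℂ) = ((1 - r : ℝ) : ℂ) := by push_cast; ring
    rw [hquotdef]
    show ‖(α - F r) / (1 - (r : ℂ))‖ ^ 2 = ‖α - F r‖ ^ 2 / (1 - r) ^ 2
    rw [h1, norm_div, Complex.norm_real, Real.norm_eq_abs, abs_of_pos (by linarith), div_pow]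
  -- c.re ≥ 0, hence = ‖dc‖
  have hMpos : ∀ᶠ r in 𝓝[<] (1 : ℝ), 0 ≤ (cα * quot r).re := by
    filter_upwards [hIoo, hFle] with r hr hFr
    rw [hconv r hr.2]
    have hkey := LineMassAux.key_id α (F r) hα
    have h2 : 0 ≤ (cα * (α - F r)).re := by
      nlinarith [hkey, hFr, norm_nonneg (F r), sq_nonneg (‖α - F r‖), sq_nonneg (1 - ‖F r‖)]
    exact div_nonneg h2 (by linarith [hr.2])
  have hccre0 : 0 ≤ cc.re := ge_of_tendsto hM hMpos
  have hccre : cc.re = ‖dc‖ := by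
    have h1 : ‖cc‖ ^ 2 = cc.re ^ 2 + cc.im ^ 2 := by
      rw [Complex.sq_norm, Complex.normSq_apply]; ring
    rw [hccnorm, hccim] at h1
    nlinarith [h1, hccre0, norm_nonneg dc]
  -- main limit
  have hGlim : Tendsto
      (fun r => (2 * (cα * quot r).re - (1 - r) * ‖quot r‖ ^ 2) / ‖quot r‖ ^ 2)
      (𝓝[<] (1 : ℝ)) (𝓝 ((2 * cc.re - 0 * ‖dc‖ ^ 2) / ‖dc‖ ^ 2)) := by
    apply Tendsto.div _ hL (by positivity)
    apply Tendsto.sub (hM.const_mul 2)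
    apply Tendsto.mul _ hL
    have hc : Continuous fun r : ℝ => 1 - r := continuous_const.sub continuous_id
    have := (hc.tendsto 1).mono_left (nhdsWithin_le_nhds (s := Set.Iio (1 : ℝ)))
    simpa using this
  have hval : (2 * cc.re - 0 * ‖dc‖ ^ 2) / ‖dc‖ ^ 2 = 2 / ‖dc‖ := by
    rw [hccre, zero_mul, sub_zero, pow_two,
      div_eq_div_iff (mul_ne_zero (ne_of_gt hdcpos) (ne_of_gt hdcpos)) (ne_of_gt hdcpos)]
    ring
  rw [hval] at hGlim
  apply Tendsto.congr' _ hGlim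
  filter_upwards [hIoo, hune, hFle] with r hr hu hFr
  have ht0 : (0 : ℝ) < 1 - r := by linarith [hr.2]
  have hU0 : (0 : ℝ) < ‖α - F r‖ := norm_pos_iff.mpr hu
  rw [hconv r hr.2, hconv2 r hr.1 hr.2]
  have hkey := LineMassAux.key_id α (F r) hα
  rw [hkey]
  exact LineMassAux.quot_alg _ _ _ ht0 hU0
end
end
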